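/- arXiv:1112.1288 — 9 statements merged into one kernel-verified Lean document; each statement's English description precedes it below -/
import Mathlib

section
/- Let 𝔤 be a finite-dimensional real Lie algebra and let Y ∈ 𝔤 be nonzero. There exists an inner product on 𝔤 for which Y is a geodesic if and only if there does not exist X ∈ 𝔤 with [X,Y] = Y. -/
/-- A "sum of squares of coordinates" positive-definite symmetric bilinear form
on a finite-dimensional real vector space. -/
noncomputable def sqForm (g : Type*) [AddCommGroup g] [Module ℝ g] [FiniteDimensional ℝ g] :
    g →ₗ[ℝ] g →ₗ[ℝ] ℝ :=
  LinearMap.mk₂ ℝ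
    (fun x y => ∑ i, (Module.finBasis ℝ g).equivFun x i * (Module.finBasis ℝ g).equivFun y i)
    (by intro x x' y; simp [map_add, add_mul, Finset.sum_add_distrib])
    (by intro c x y; simp [Finset.mul_sum, mul_assoc])
    (by intro x y y'; simp [map_add, mul_add, Finset.sum_add_distrib])
    (by
      intro c x y
      simp only [map_smul, Pi.smul_apply, smul_eq_mul, Finset.mul_sum]
      congr 1; ext i; ring)

lemma sqForm_apply {g : Type*} [AddCommGroup g] [Module ℝ g] [FiniteDimensional ℝ g]
    (x y : g) : sqForm g x y =
      ∑ i, (Module.finBasis ℝ g).equivFun x i * (Module.finBasis ℝ g).equivFun y i := rfl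

lemma sqForm_symm {g : Type*} [AddCommGroup g] [Module ℝ g] [FiniteDimensional ℝ g]
    (x y : g) : sqForm g x y = sqForm g y x := by
  simp only [sqForm_apply]
  congr 1; ext i; ring

lemma sqForm_nonneg {g : Type*} [AddCommGroup g] [Module ℝ g] [FiniteDimensional ℝ g]
    (x : g) : 0 ≤ sqForm g x x := by
  simp only [sqForm_apply]
  exact Finset.sum_nonneg fun i _ => mul_self_nonneg _

lemma sqForm_pos {g : Type*} [AddCommGroup g] [Module ℝ g] [FiniteDimensional ℝ g]
    {x : g} (hx : x ≠ 0) : 0 < sqForm g x x := by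
  simp only [sqForm_apply]
  have hne : (Module.finBasis ℝ g).equivFun x ≠ 0 :=
    fun h => hx ((Module.finBasis ℝ g).equivFun.map_eq_zero_iff.mp h)
  obtain ⟨i, hi⟩ := Function.ne_iff.mp hne
  exact Finset.sum_pos' (fun j _ => mul_self_nonneg _)
    ⟨i, Finset.mem_univ i, mul_self_pos.mpr (by simpa using hi)⟩

/-- For a nonzero element `Y` of a finite-dimensional real Lie algebra `g`,
there exists an inner product on `g` making `Y` a geodesic if and only if there is no
`X ∈ g` with `[X,Y] = Y`. -/
theorem exists_innerProduct_geodesic_iff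
    (g : Type*) [LieRing g] [LieAlgebra ℝ g] [FiniteDimensional ℝ g]
    (Y : g) (hY : Y ≠ 0) :
    (∃ B : g →ₗ[ℝ] g →ₗ[ℝ] ℝ,
      (∀ x y : g, B x y = B y x) ∧ (∀ x : g, x ≠ 0 → 0 < B x x) ∧
      (∀ X : g, B ⁅X, Y⁆ Y = 0)) ↔
    ¬ ∃ X : g, ⁅X, Y⁆ = Y := by
  constructor
  · rintro ⟨B, hsym, hpos, hgeo⟩ ⟨X, hX⟩
    have h := hgeo X
    rw [hX] at h
    exact absurd h (ne_of_gt (hpos Y hY))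
  · intro hn
    -- the map X ↦ ⁅X, Y⁆
    set φ : g →ₗ[ℝ] g :=
      { toFun := fun X => ⁅X, Y⁆
        map_add' := fun a b => add_lie a b Y
        map_smul' := fun c a => smul_lie c a Y } with hφ
    set V : Submodule ℝ g := LinearMap.range φ with hV
    have hYV : Y ∉ V := by
      rintro ⟨X, hX⟩
      exact hn ⟨X, hX⟩
    -- a functional vanishing on V with f Y = 1
    have hmk : (V.mkQ Y) ≠ 0 := by
      simpa [Submodule.Quotient.mk_eq_zero] using hYV
    obtain ⟨f', hf'⟩ : ∃ f' : Module.Dual ℝ (g ⧸ V), f' (V.mkQ Y) ≠ 0 := by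
      by_contra h
      push_neg at h
      exact hmk ((Module.forall_dual_apply_eq_zero_iff ℝ _).mp h)
    set f : g →ₗ[ℝ] ℝ := (f' (V.mkQ Y))⁻¹ • (f'.comp V.mkQ) with hf
    have hfY : f Y = 1 := by
      simp only [hf, LinearMap.smul_apply, LinearMap.comp_apply, smul_eq_mul]
      exact inv_mul_cancel₀ hf'
    have hfV : ∀ v ∈ V, f v = 0 := by
      intro v hv
      simp [hf, (Submodule.Quotient.mk_eq_zero V).mpr hv]
    -- projection onto ker f along Y
    set P : g →ₗ[ℝ] g := LinearMap.id - f.smulRight Y with hP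
    have hPY : P Y = 0 := by
      simp [hP, hfY]
    -- build the bilinear form
    refine ⟨LinearMap.mk₂ ℝ (fun x y => f x * f y + sqForm g (P x) (P y))
      (by intro x x' y; simp [map_add, add_mul]; ring)
      (by intro c x y; simp [map_smul]; ring)
      (by intro x y y'; simp [map_add, mul_add]; ring)
      (by intro c x y; simp [map_smul]; ring), ?_, ?_, ?_⟩
    · intro x y
      simp only [LinearMap.mk₂_apply]
      rw [sqForm_symm, mul_comm]
    · intro x hx
      simp only [LinearMap.mk₂_apply]
      by_cases hfx : f x = 0
      · have hPx : P x = x := by simp [hP, hfx]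
        rw [hfx, hPx]
        simpa using sqForm_pos hx
      · have : 0 < f x * f x := mul_self_pos.mpr hfx
        have := sqForm_nonneg (P x)
        linarith
    · intro X
      simp only [LinearMap.mk₂_apply]
      have h1 : f ⁅X, Y⁆ = 0 := hfV _ ⟨X, rfl⟩
      rw [h1, hPY]
      simp
end

section
/- Let 𝔤 be a finite-dimensional real Lie algebra. The following conditions are equivalent: (a) there exists an inner product on 𝔤 for which every nonzero element of 𝔤 is a geodesic; (b) there exist Lie ideals 𝔞 and 𝔰 of 𝔤 such that 𝔤 is the internal direct sum of 𝔞 and 𝔰, the ideal 𝔞 is abelian, and the Killing form of 𝔰 is negative definite (i.e. 𝔰 is semisimple of compact type). -/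
open LinearMap in
/-- Any finite-dimensional real vector space has a symmetric positive definite bilinear form. -/
lemma exists_posdef_form (V : Type*) [AddCommGroup V] [Module ℝ V] [FiniteDimensional ℝ V] :
    ∃ B : V →ₗ[ℝ] V →ₗ[ℝ] ℝ, (∀ x y, B x y = B y x) ∧ ∀ x : V, x ≠ 0 → 0 < B x x := by
  classical
  let b := Module.finBasis ℝ V
  refine ⟨LinearMap.mk₂ ℝ (fun u v => ∑ i, b.repr u i * b.repr v i) ?_ ?_ ?_ ?_, ?_, ?_⟩
  · intro m n p; simp [Finset.sum_add_distrib, add_mul]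
  · intro c m n; simp [Finset.mul_sum, mul_assoc]
  · intro m n p; simp [Finset.sum_add_distrib, mul_add]
  · intro c m n; simp [Finset.mul_sum]; ring_nf; simp [mul_assoc, mul_comm, mul_left_comm]
  · intro x y; simp [mk₂_apply, mul_comm]
  · intro x hx
    simp only [mk₂_apply]
    have h : ∃ i, b.repr x i ≠ 0 := by
      by_contra h; push_neg at h
      exact hx (by simpa using (b.repr.map_eq_zero_iff).mp (by ext i; simp [h i]))
    obtain ⟨i, hi⟩ := h
    refine Finset.sum_pos' (fun j _ => mul_self_nonneg _) ⟨i, Finset.mem_univ i, mul_self_pos.mpr hi⟩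

open RealInnerProductSpace in
lemma skew_trace_neg {E : Type*} [NormedAddCommGroup E] [InnerProductSpace ℝ E]
    [FiniteDimensional ℝ E] (f : E →ₗ[ℝ] E)
    (hf : ∀ x y : E, ⟪f x, y⟫ = -⟪x, f y⟫) (hne : f ≠ 0) :
    LinearMap.trace ℝ E (f ∘ₗ f) < 0 := by
  classical
  let b := stdOrthonormalBasis ℝ E
  have htr : LinearMap.trace ℝ E (f ∘ₗ f) = ∑ i, ⟪b i, f (f (b i))⟫ := by
    rw [LinearMap.trace_eq_matrix_trace ℝ b.toBasis, Matrix.trace]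
    congr 1
    ext i
    rw [Matrix.diag_apply, LinearMap.toMatrix_apply, b.coe_toBasis, b.coe_toBasis_repr_apply,
      b.repr_apply_apply]
    rfl
  have key : ∀ i, ⟪b i, f (f (b i))⟫ = -⟪f (b i), f (b i)⟫ := by
    intro i
    rw [real_inner_comm, hf]
  rw [htr]
  simp_rw [key]
  rw [Finset.sum_neg_distrib, neg_lt, neg_zero]
  have hex : ∃ i, f (b i) ≠ 0 := by
    by_contra h; push_neg at h
    exact hne (b.toBasis.ext (by simpa [b.coe_toBasis] using h))
  obtain ⟨i, hi⟩ := hex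
  exact Finset.sum_pos' (fun j _ => real_inner_self_nonneg)
    ⟨i, Finset.mem_univ i, lt_of_le_of_ne real_inner_self_nonneg (fun h => hi (inner_self_eq_zero.mp h.symm))⟩

/-- A finite-dimensional real Lie algebra `g` admits an inner product for which
every nonzero element is a geodesic if and only if `g` is the internal direct sum of an
abelian ideal `a` and an ideal `s` whose Killing form is negative definite (i.e. `s` is
semisimple of compact type). -/
theorem exists_innerProduct_all_geodesic_iff_compact_type
    (g : Type*) [LieRing g] [LieAlgebra ℝ g] [FiniteDimensional ℝ g] :
    (∃ B : g →ₗ[ℝ] g →ₗ[ℝ] ℝ,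
      (∀ x y : g, B x y = B y x) ∧ (∀ x : g, x ≠ 0 → 0 < B x x) ∧
      (∀ Y : g, Y ≠ 0 → ∀ X : g, B ⁅X, Y⁆ Y = 0)) ↔
    (∃ a s : LieIdeal ℝ g,
      a ⊔ s = ⊤ ∧ a ⊓ s = ⊥ ∧ IsLieAbelian a ∧
      (∀ x : s, x ≠ 0 → killingForm ℝ s x x < 0)) := by
  constructor
  · rintro ⟨B, hsymm, hpos, hgeo⟩
    classical
    have hgeo0 : ∀ X Y : g, B ⁅X, Y⁆ Y = 0 := by
      intro X Y
      rcases eq_or_ne Y 0 with rfl | h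
      · simp
      · exact hgeo Y h X
    have hskew : ∀ X Y Z : g, B ⁅X, Y⁆ Z = - B Y ⁅X, Z⁆ := by
      intro X Y Z
      have h := hgeo0 X (Y + Z)
      simp only [lie_add, map_add, LinearMap.add_apply] at h
      rw [hgeo0 X Y, hgeo0 X Z] at h
      have : B ⁅X, Y⁆ Z + B ⁅X, Z⁆ Y = 0 := by linarith
      rw [hsymm Y ⁅X, Z⁆]
      linarith
    -- inner product space structure
    letI core : InnerProductSpace.Core ℝ g :=
      { inner := fun x y => B x y
        conj_inner_symm := fun x y => by simpa using hsymm y x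
        re_inner_nonneg := fun x => by
          rcases eq_or_ne x 0 with rfl | h
          · simp
          · simpa using (hpos x h).le
        add_left := fun x y z => by simp
        smul_left := fun x y r => by simp
        definite := fun x hx => by
          by_contra h
          exact absurd hx (ne_of_gt (hpos x h)) }
    letI : NormedAddCommGroup g := core.toNormedAddCommGroup
    letI : InnerProductSpace ℝ g := InnerProductSpace.ofCore core.toCore
    have hinner : ∀ x y : g, (inner ℝ x y : ℝ) = B x y := fun _ _ => rfl
    set Z : Submodule ℝ g := (LieAlgebra.center ℝ g).toSubmodule with hZ
    set Ssub : Submodule ℝ g := Zᗮ with hSsub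
    have hcompl : IsCompl Z Ssub := Z.isCompl_orthogonal
    have hmemS : ∀ m : g, m ∈ Ssub ↔ ∀ z ∈ Z, (inner ℝ z m : ℝ) = 0 := fun m =>
      Submodule.mem_orthogonal Z m
    have hcent : ∀ z ∈ Z, ∀ x : g, ⁅x, z⁆ = 0 := by
      intro z hz x
      exact (LieModule.mem_maxTrivSubmodule ℝ g g z).mp hz x
    set sI : LieIdeal ℝ g :=
      { Ssub with
        lie_mem := by
          intro x m hm
          show ⁅x, m⁆ ∈ Ssub
          rw [Submodule.mem_orthogonal]
          intro z hz
          rw [hinner, hsymm, hskew, hcent z hz x]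
          simp } with hsI
    refine ⟨LieAlgebra.center ℝ g, sI, ?_, ?_, inferInstance, ?_⟩
    · rw [← LieSubmodule.toSubmodule_inj, LieSubmodule.sup_toSubmodule,
        LieSubmodule.top_toSubmodule]
      exact codisjoint_iff.mp hcompl.codisjoint
    · rw [← LieSubmodule.toSubmodule_inj, LieSubmodule.inf_toSubmodule,
        LieSubmodule.bot_toSubmodule]
      exact disjoint_iff.mp hcompl.disjoint
    · intro x hx
      set f : (↥Ssub) →ₗ[ℝ] (↥Ssub) := LieAlgebra.ad ℝ (↥sI) x with hf
      have hftr : killingForm ℝ (↥sI) x x = LinearMap.trace ℝ (↥Ssub) (f ∘ₗ f) :=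
        killingForm_apply_apply (R := ℝ) (L := ↥sI) x x
      rw [hftr]
      apply skew_trace_neg
      · intro u v
        show B (↑(⁅x, u⁆ : ↥sI)) ↑v = - B ↑u (↑(⁅x, v⁆ : ↥sI))
        show B ⁅(↑x : g), ↑u⁆ ↑v = - B ↑u ⁅(↑x : g), ↑v⁆
        exact hskew _ _ _
      · intro hf0
        apply hx
        have hbr : ∀ y : g, ⁅(↑x : g), y⁆ = 0 := by
          intro y
          have hy : y ∈ Z ⊔ Ssub := by
            rw [codisjoint_iff.mp hcompl.codisjoint]; trivial
          obtain ⟨z, hz, w, hw, rfl⟩ := Submodule.mem_sup.mp hy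
          rw [lie_add]
          have h1 : ⁅(↑x : g), z⁆ = 0 := hcent z hz _
          have h2 : ⁅(↑x : g), w⁆ = 0 := by
            have h3 : f ⟨w, hw⟩ = 0 := by rw [hf0]; rfl
            exact congrArg Subtype.val h3
          rw [h1, h2, add_zero]
        have hxc : (↑x : g) ∈ Z := by
          rw [hZ]
          exact (LieModule.mem_maxTrivSubmodule ℝ g g _).mpr
            (fun y => by rw [← lie_skew, hbr y, neg_zero])
        have hxS : (↑x : g) ∈ Ssub := x.2
        have : (↑x : g) = 0 := by
          have := hcompl.disjoint
          rw [disjoint_iff] at this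
          have hmem : (↑x : g) ∈ Z ⊓ Ssub := ⟨hxc, hxS⟩
          rw [this] at hmem
          simpa using hmem
        exact Subtype.ext this
  · rintro ⟨a, s, hsup, hinf, habel, hkill⟩
    classical
    obtain ⟨Ba, hBa_symm, hBa_pos⟩ := exists_posdef_form (↥a)
    set A : Submodule ℝ g := a.toSubmodule with hA
    set S : Submodule ℝ g := s.toSubmodule with hS
    have hcompl : IsCompl A S := by
      constructor
      · rw [disjoint_iff, ← LieSubmodule.inf_toSubmodule, hinf]; rfl
      · rw [codisjoint_iff, ← LieSubmodule.sup_toSubmodule, hsup]; rfl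
    set pA : g →ₗ[ℝ] ↥a := A.linearProjOfIsCompl S hcompl with hpA
    set pS : g →ₗ[ℝ] ↥s := S.linearProjOfIsCompl A hcompl.symm with hpS
    set Bs : (↥s) →ₗ[ℝ] (↥s) →ₗ[ℝ] ℝ := -killingForm ℝ s with hBs
    set B : g →ₗ[ℝ] g →ₗ[ℝ] ℝ := (Ba.compl₁₂ pA pA) + (Bs.compl₁₂ pS pS) with hB
    have hBapp : ∀ x y : g, B x y = Ba (pA x) (pA y) + Bs (pS x) (pS y) := fun x y => rfl
    have hdecomp : ∀ x : g, (↑(pA x) : g) + ↑(pS x) = x := fun x =>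
      Submodule.projection_add_projection_eq_self hcompl x
    refine ⟨B, ?_, ?_, ?_⟩
    · intro x y
      rw [hBapp, hBapp, hBa_symm]
      congr 1
      simp [hBs, LieModule.traceForm_comm]
    · intro x hx
      rw [hBapp]
      have h1 : (0:ℝ) ≤ Ba (pA x) (pA x) := by
        rcases eq_or_ne (pA x) 0 with h | h
        · simp [h]
        · exact (hBa_pos _ h).le
      have h2 : (0:ℝ) ≤ Bs (pS x) (pS x) := by
        rcases eq_or_ne (pS x) 0 with h | h
        · simp [h]
        · simpa [hBs] using (hkill _ h).le
      rcases eq_or_ne (pA x) 0 with h | h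
      · have hS0 : pS x ≠ 0 := by
          intro h'
          apply hx
          rw [← hdecomp x, h, h']; simp
        have : 0 < Bs (pS x) (pS x) := by simpa [hBs] using hkill _ hS0
        linarith
      · have := hBa_pos _ h; linarith
    · intro Y _ X
      -- ⁅X, Y⁆ = ↑⁅pS X, pS Y⁆
      have hmem : ∀ (u : ↥a) (v : ↥s), ⁅(↑u : g), (↑v : g)⁆ = 0 ∧ ⁅(↑v : g), (↑u : g)⁆ = 0 := by
        intro u v
        have h1 : ⁅(↑u : g), (↑v : g)⁆ ∈ a ⊓ s := by
          constructor
          · rw [← lie_skew]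
            exact neg_mem (a.lie_mem u.2)
          · exact s.lie_mem v.2
        have h2 : ⁅(↑v : g), (↑u : g)⁆ ∈ a ⊓ s := by
          constructor
          · exact a.lie_mem u.2
          · rw [← lie_skew]
            exact neg_mem (s.lie_mem v.2)
        rw [hinf] at h1 h2
        exact ⟨by simpa using h1, by simpa using h2⟩
      have hkey : ⁅X, Y⁆ = (↑(⁅pS X, pS Y⁆ : ↥s) : g) := by
        have hXd := hdecomp X
        have hYd := hdecomp Y
        have habel' : ⁅(↑(pA X) : g), (↑(pA Y) : g)⁆ = 0 := by
          have : ⁅(pA X), (pA Y)⁆ = 0 := trivial_lie_zero _ _ _ _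
          calc ⁅(↑(pA X) : g), (↑(pA Y) : g)⁆ = ↑(⁅pA X, pA Y⁆ : ↥a) := rfl
          _ = 0 := by rw [this]; rfl
        calc ⁅X, Y⁆ = ⁅(↑(pA X) : g) + ↑(pS X), (↑(pA Y) : g) + ↑(pS Y)⁆ := by rw [hXd, hYd]
          _ = ⁅(↑(pA X) : g), (↑(pA Y) : g)⁆ + ⁅(↑(pA X) : g), (↑(pS Y) : g)⁆
              + (⁅(↑(pS X) : g), (↑(pA Y) : g)⁆ + ⁅(↑(pS X) : g), (↑(pS Y) : g)⁆) := by
                rw [lie_add, add_lie, add_lie]; abel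
          _ = ⁅(↑(pS X) : g), (↑(pS Y) : g)⁆ := by
                rw [habel', (hmem (pA X) (pS Y)).1, (hmem (pA Y) (pS X)).2]; simp
          _ = ↑(⁅pS X, pS Y⁆ : ↥s) := rfl
      have hpA0 : pA ⁅X, Y⁆ = 0 := by
        rw [hkey]
        exact Submodule.linearProjOfIsCompl_apply_right' hcompl (⁅pS X, pS Y⁆ : ↥s).2
      have hpS1 : pS ⁅X, Y⁆ = ⁅pS X, pS Y⁆ := by
        rw [hkey]
        exact Submodule.linearProjOfIsCompl_apply_left hcompl.symm _
      rw [hBapp, hpA0, hpS1]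
      simp only [map_zero, LinearMap.zero_apply, zero_add, hBs, LinearMap.neg_apply, neg_eq_zero]
      rw [LieModule.traceForm_apply_lie_apply]
      simp
end

section
/- Every metric Lie algebra of positive dimension possesses a geodesic: if 𝔤 is a finite-dimensional real Lie algebra with dim 𝔤 ≥ 1, equipped with an inner product ⟨·,·⟩, then there exists a nonzero Y ∈ 𝔤 such that ⟨[X,Y],Y⟩ = 0 for all X ∈ 𝔤. -/
open Polynomial in
lemma aux_det_eq_eval_charpoly {M : Type*} [AddCommGroup M] [Module ℝ M]
    [FiniteDimensional ℝ M] (f : Module.End ℝ M) (s : ℝ) :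
    LinearMap.det (s • (1 : Module.End ℝ M) - f) = (LinearMap.charpoly f).eval s := by
  classical
  let b := Module.finBasis ℝ M
  rw [← LinearMap.charpoly_toMatrix f b, ← LinearMap.det_toMatrix b]
  have h1 : (LinearMap.toMatrix b b) (s • (1 : Module.End ℝ M) - f)
      = s • (1 : Matrix _ _ ℝ) - LinearMap.toMatrix b b f := by
    rw [map_sub, map_smul, LinearMap.toMatrix_one]
  rw [h1]
  set A := LinearMap.toMatrix b b f with hA
  have h2 : (Matrix.charpoly A).eval s
      = ((Matrix.charmatrix A).map (Polynomial.evalRingHom s)).det := by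
    rw [Matrix.charpoly]
    exact RingHom.map_det (Polynomial.evalRingHom s) (Matrix.charmatrix A)
  have h3 : (Matrix.charmatrix A).map (Polynomial.evalRingHom s)
      = s • (1 : Matrix _ _ ℝ) - A := by
    ext i j
    by_cases h : i = j
    · subst h
      simp [Matrix.map_apply, Matrix.charmatrix_apply_eq, Matrix.sub_apply,
        Matrix.smul_apply, Matrix.one_apply_eq]
    · simp [Matrix.map_apply, Matrix.charmatrix_apply_ne _ _ _ h, Matrix.sub_apply,
        Matrix.smul_apply, Matrix.one_apply_ne h]
  rw [h2, h3]

attribute [local instance] LieRing.ofAssociativeRing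

set_option maxHeartbeats 2000000
set_option synthInstance.maxHeartbeats 1000000

/-- Kaizer: Every metric Lie algebra of positive dimension possesses a
geodesic: there is a nonzero `Y` with `⟨[X,Y],Y⟩ = 0` for all `X`. -/
theorem exists_geodesic
    (g : Type*) [LieRing g] [LieAlgebra ℝ g] [FiniteDimensional ℝ g]
    (hdim : 1 ≤ Module.finrank ℝ g)
    (B : g →ₗ[ℝ] g →ₗ[ℝ] ℝ)
    (hsymm : ∀ x y : g, B x y = B y x)
    (hpos : ∀ x : g, x ≠ 0 → 0 < B x x) :
    ∃ Y : g, Y ≠ 0 ∧ ∀ X : g, B ⁅X, Y⁆ Y = 0 := by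
  classical
  letI core : InnerProductSpace.Core ℝ g :=
    { inner := fun x y => B x y
      conj_inner_symm := fun x y => by simpa using hsymm y x
      re_inner_nonneg := fun x => by
        rcases eq_or_ne x 0 with rfl | h
        · simp
        · simpa using (hpos x h).le
      add_left := fun x y z => by
        show B (x + y) z = B x z + B y z
        rw [map_add, LinearMap.add_apply]
      smul_left := fun x y r => by
        show B (r • x) y = (starRingEnd ℝ) r * B x y
        rw [map_smul, LinearMap.smul_apply, smul_eq_mul]
        simp
      definite := fun x hx => by
        by_contra h
        exact (hpos x h).ne' (by simpa using hx) }
  letI : NormedAddCommGroup g := @InnerProductSpace.Core.toNormedAddCommGroup ℝ g _ _ _ core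
  letI : InnerProductSpace ℝ g := InnerProductSpace.ofCore core.toCore
  have hinner : ∀ x y : g, (inner ℝ x y : ℝ) = B x y := fun x y => rfl
  by_cases hD : LieModule.lowerCentralSeries ℝ g g 1 = ⊤
  · -- hard case
    haveI : CompleteSpace g := FiniteDimensional.complete ℝ g
    letI : NormedAlgebra ℚ (g →L[ℝ] g) := NormedAlgebra.restrictScalars ℚ ℝ (g →L[ℝ] g)
    -- g is not a nilpotent Lie algebra
    have hnotnil : ¬ LieModule.IsNilpotent g g := by
      intro hnil
      obtain ⟨k, hk⟩ := LieModule.IsNilpotent.nilpotent ℝ g g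
      have hD' : ⁅(⊤ : LieIdeal ℝ g), (⊤ : LieSubmodule ℝ g g)⁆ = ⊤ := by
        have h01 := LieModule.lowerCentralSeries_succ ℝ g g 0
        rw [LieModule.lowerCentralSeries_zero] at h01
        rw [← h01]
        exact hD
      have htop : ∀ m, LieModule.lowerCentralSeries ℝ g g m = ⊤ := by
        intro m
        induction m with
        | zero => exact LieModule.lowerCentralSeries_zero ℝ g g
        | succ p ih =>
          rw [LieModule.lowerCentralSeries_succ, ih]
          exact hD'
      have hbot : (⊤ : LieSubmodule ℝ g g) = ⊥ := by rw [← htop k, hk]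
      have hzero : ∀ x : g, x = 0 := by
        intro x
        have hx : x ∈ (⊤ : LieSubmodule ℝ g g) := LieSubmodule.mem_top x
        rw [hbot] at hx
        simpa using hx
      haveI : Subsingleton g := subsingleton_of_forall_eq 0 fun x => hzero x
      have := Module.finrank_zero_of_subsingleton (R := ℝ) (M := g)
      omega
    -- by Engel's theorem, some `ad` is not nilpotent
    obtain ⟨Y₀, hY₀⟩ : ∃ Y₀ : g, ¬ IsNilpotent (LieModule.toEnd ℝ g g Y₀) := by
      by_contra h
      push_neg at h
      exact hnotnil ((LieModule.isNilpotent_iff_forall (R := ℝ) (L := g) (M := g)).mpr h)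
    -- choose a point where the characteristic polynomial differs from Xⁿ
    have hch : LinearMap.charpoly (LieModule.toEnd ℝ g g Y₀)
        ≠ Polynomial.X ^ (Module.finrank ℝ g) := by
      intro h
      exact hY₀ ((LinearMap.isNilpotent_iff_charpoly _).mpr h)
    obtain ⟨s₀, hs₀⟩ : ∃ s : ℝ, (LinearMap.charpoly (LieModule.toEnd ℝ g g Y₀)).eval s
        ≠ s ^ (Module.finrank ℝ g) := by
      by_contra h
      push_neg at h
      apply hch
      apply Polynomial.funext
      intro r
      simpa using h r
    -- the invariant function
    set F : g → ℝ :=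
      fun z => LinearMap.det (s₀ • (1 : Module.End ℝ g) - LieModule.toEnd ℝ g g z) with hF
    have hFY₀ : F Y₀ ≠ s₀ ^ (Module.finrank ℝ g) := by
      show LinearMap.det (s₀ • (1 : Module.End ℝ g) - LieModule.toEnd ℝ g g Y₀) ≠ _
      simpa [aux_det_eq_eval_charpoly] using hs₀
    have hF0 : F 0 = s₀ ^ (Module.finrank ℝ g) := by
      have h0 : LieModule.toEnd ℝ g g (0 : g) = 0 := map_zero _
      show LinearMap.det (s₀ • (1 : Module.End ℝ g) - LieModule.toEnd ℝ g g 0) = _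
      rw [h0, aux_det_eq_eval_charpoly]
      have h1 : LinearMap.charpoly (0 : Module.End ℝ g)
          = Polynomial.X ^ (Module.finrank ℝ g) :=
        IsNilpotent.charpoly_eq_X_pow_finrank ⟨1, by simp⟩
      rw [h1]
      simp
    have hFcont : Continuous F := by
      let b := Module.finBasis ℝ g
      let l : g →ₗ[ℝ] Matrix (Fin (Module.finrank ℝ g)) (Fin (Module.finrank ℝ g)) ℝ :=
        (LinearMap.toMatrix b b).toLinearMap ∘ₗ (LieModule.toEnd ℝ g g).toLinearMap
      have hFeq : F = fun z =>
          (s₀ • (1 : Matrix (Fin (Module.finrank ℝ g)) (Fin (Module.finrank ℝ g)) ℝ) - l z).det := by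
        funext z
        show LinearMap.det (s₀ • (1 : Module.End ℝ g) - LieModule.toEnd ℝ g g z) = _
        rw [← LinearMap.det_toMatrix b, map_sub, map_smul, LinearMap.toMatrix_one]
        rfl
      rw [hFeq]
      exact Continuous.matrix_det (continuous_const.sub l.continuous_of_finiteDimensional)
    -- the adjoint representation, valued in continuous endomorphisms
    let adE : g →ₗ[ℝ] (g →L[ℝ] g) :=
      (LinearMap.toContinuousLinearMap :
        (g →ₗ[ℝ] g) ≃ₗ[ℝ] (g →L[ℝ] g)).toLinearMap ∘ₗ (LieAlgebra.ad ℝ g).toLinearMap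
    have hadE : ∀ z v : g, adE z v = ⁅z, v⁆ := by
      intro z v
      simp [adE, LieAlgebra.ad_apply]
    -- invariance of F under the flows of the adjoint representation
    have hinv : ∀ (W Z : g) (t : ℝ), F (NormedSpace.exp (t • adE W) Z) = F Z := by
      intro W Z t
      set A : g →L[ℝ] g := adE W with hA
      set P : ℝ → (g →L[ℝ] g) := fun s => NormedSpace.exp (s • A) with hP
      set Q : ℝ → (g →L[ℝ] g) := fun s => NormedSpace.exp (s • (-A)) with hQ
      have hPder : ∀ s : ℝ, HasDerivAt P (P s * A) s := fun s => hasDerivAt_exp_smul_const A s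
      have hQder : ∀ s : ℝ, HasDerivAt Q ((-A) * Q s) s := fun s =>
        hasDerivAt_exp_smul_const' (-A) s
      have hAP : ∀ s : ℝ, Commute A (P s) := fun s =>
        Commute.exp_right ((Commute.refl A).smul_right s)
      have hAQ : ∀ s : ℝ, Commute A (Q s) := fun s =>
        Commute.exp_right (((Commute.refl A).neg_right).smul_right s)
      have hsum : ∀ s : ℝ, s • (-A) + s • A = 0 := by
        intro s
        rw [← smul_add, neg_add_cancel, smul_zero]
      have hQP : ∀ s : ℝ, Q s * P s = 1 := by
        intro s
        rw [hQ, hP, ← NormedSpace.exp_add_of_commute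
          (((Commute.refl A).neg_left).smul_left s |>.smul_right s), hsum s, NormedSpace.exp_zero]
      have hPQ : ∀ s : ℝ, P s * Q s = 1 := by
        intro s
        rw [hQ, hP, ← NormedSpace.exp_add_of_commute
          (((Commute.refl A).neg_right).smul_right s |>.smul_left s)]
        rw [show s • A + s • (-A) = 0 by rw [← smul_add, add_neg_cancel, smul_zero]]
        rw [NormedSpace.exp_zero]
      set c : ℝ → g := fun s => P s Z with hc
      have hcder : ∀ s : ℝ, HasDerivAt c (A (c s)) s := by
        intro s
        have h1 := (hPder s).clm_apply (hasDerivAt_const s Z)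
        have h2 : (P s * A) Z = A (c s) := by
          rw [← (hAP s).eq]
          rfl
        simpa [h2] using h1
      set M : ℝ → (g →L[ℝ] g) := fun s => adE (c s) with hM
      have hMder : ∀ s : ℝ, HasDerivAt M (A * M s - M s * A) s := by
        intro s
        have h1 : HasDerivAt (fun u : ℝ => adE (c u))
            ((LinearMap.toContinuousLinearMap adE) (A (c s))) s :=
          ((LinearMap.toContinuousLinearMap adE).hasFDerivAt).comp_hasDerivAt s (hcder s)
        have h2 : (LinearMap.toContinuousLinearMap adE) (A (c s)) = A * M s - M s * A := by
          have h3 : A (c s) = ⁅W, c s⁆ := hadE W (c s)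
          rw [LinearMap.coe_toContinuousLinearMap' adE, h3]
          ext v
          simp [hadE, ContinuousLinearMap.sub_apply, ContinuousLinearMap.mul_apply, lie_lie, hA, hM]
        rw [h2] at h1
        exact h1
      set G : ℝ → (g →L[ℝ] g) := fun s => Q s * (M s * P s) with hG
      have hGder : ∀ s : ℝ, HasDerivAt G 0 s := by
        intro s
        have h := (hQder s).mul ((hMder s).mul (hPder s))
        convert h using 1 <;> try rfl
        have e1 : A * Q s = Q s * A := (hAQ s).eq
        have e2 : A * P s = P s * A := (hAP s).eq
        rw [← e2, neg_mul, e1]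
        simp only [Pi.mul_apply]
        noncomm_ring
      have hGconst : ∀ s : ℝ, G s = G 0 := fun s =>
        is_const_of_deriv_eq_zero (fun u => (hGder u).differentiableAt)
          (fun u => (hGder u).deriv) s 0
      have hP0 : P 0 = 1 := by
        rw [hP]
        simp only [zero_smul]
        exact NormedSpace.exp_zero
      have hQ0 : Q 0 = 1 := by
        rw [hQ]
        simp only [zero_smul]
        exact NormedSpace.exp_zero
      have hc0 : c 0 = Z := by
        rw [hc]
        simp only [hP0]
        rfl
      have hG0 : G 0 = adE Z := by
        rw [hG]
        simp only [hQ0, hP0, one_mul, mul_one, hM, hc0]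
      have hMt : M t = P t * (adE Z * Q t) := by
        have h := hGconst t
        rw [hG0] at h
        have h' : Q t * (M t * P t) = adE Z := h
        calc M t = 1 * M t * 1 := by rw [one_mul, mul_one]
          _ = (P t * Q t) * M t * (P t * Q t) := by rw [hPQ t]
          _ = P t * (Q t * (M t * P t)) * Q t := by noncomm_ring
          _ = P t * adE Z * Q t := by rw [h']
          _ = P t * (adE Z * Q t) := by rw [mul_assoc]
      have hcomp1 : ((P t : g →ₗ[ℝ] g).comp (Q t : g →ₗ[ℝ] g)) = LinearMap.id := by
        ext v
        have h := congrArg (fun f : g →L[ℝ] g => f v) (hPQ t)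
        simpa using h
      have hcomp2 : ((Q t : g →ₗ[ℝ] g).comp (P t : g →ₗ[ℝ] g)) = LinearMap.id := by
        ext v
        have h := congrArg (fun f : g →L[ℝ] g => f v) (hQP t)
        simpa using h
      let e : g ≃ₗ[ℝ] g := LinearEquiv.ofLinear (P t : g →ₗ[ℝ] g) (Q t : g →ₗ[ℝ] g) hcomp1 hcomp2
      have hconj : LieModule.toEnd ℝ g g (c t) = e.conj (LieModule.toEnd ℝ g g Z) := by
        apply LinearMap.ext
        intro v
        have h := congrArg (fun f : g →L[ℝ] g => f v) hMt
        rw [LinearEquiv.conj_apply_apply]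
        calc (LieModule.toEnd ℝ g g (c t)) v = ⁅c t, v⁆ := LieModule.toEnd_apply_apply ℝ g g (c t) v
          _ = adE (c t) v := (hadE _ _).symm
          _ = (P t * (adE Z * Q t)) v := h
          _ = P t (adE Z (Q t v)) := by
              simp [ContinuousLinearMap.mul_apply]
          _ = e ((LieModule.toEnd ℝ g g Z) (e.symm v)) := by
              simp only [e, LinearEquiv.ofLinear_apply, LinearEquiv.ofLinear_symm_apply]
              simp [hadE, LieModule.toEnd_apply_apply]
      show LinearMap.det (s₀ • (1 : Module.End ℝ g) - LieModule.toEnd ℝ g g (c t))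
          = LinearMap.det (s₀ • (1 : Module.End ℝ g) - LieModule.toEnd ℝ g g Z)
      rw [hconj]
      have h1 : e.conj (1 : Module.End ℝ g) = 1 := by
        simp only [Module.End.one_eq_id, LinearEquiv.conj_id]
      have h2 : s₀ • (1 : Module.End ℝ g) - e.conj (LieModule.toEnd ℝ g g Z)
          = e.conj (s₀ • (1 : Module.End ℝ g) - LieModule.toEnd ℝ g g Z) := by
        rw [map_sub, map_smul, h1]
      rw [h2, LinearEquiv.conj_apply, LinearMap.comp_assoc, LinearMap.det_conj]
    -- minimize the norm on the level set of F
    set Lset : Set g := {z : g | F z = F Y₀} with hLset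
    have hLclosed : IsClosed Lset := isClosed_eq hFcont continuous_const
    have h0L : (0 : g) ∉ Lset := by
      intro h0
      have : F 0 = F Y₀ := h0
      rw [hF0] at this
      exact hFY₀ this.symm
    have hKcomp : IsCompact (Lset ∩ Metric.closedBall 0 ‖Y₀‖) :=
      (isCompact_closedBall (0 : g) ‖Y₀‖).inter_left hLclosed
    have hKne : (Lset ∩ Metric.closedBall 0 ‖Y₀‖).Nonempty :=
      ⟨Y₀, show F Y₀ = F Y₀ from rfl, by simp [Metric.mem_closedBall]⟩
    obtain ⟨Y, hYK, hYmin⟩ := hKcomp.exists_isMinOn hKne continuous_norm.continuousOn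
    rw [isMinOn_iff] at hYmin
    have hYL : Y ∈ Lset := hYK.1
    have hYne : Y ≠ 0 := fun h => h0L (h ▸ hYL)
    have hglobal : ∀ z ∈ Lset, ‖Y‖ ≤ ‖z‖ := by
      intro z hz
      by_cases hzb : ‖z‖ ≤ ‖Y₀‖
      · exact hYmin z ⟨hz, by simpa [Metric.mem_closedBall, dist_zero_right] using hzb⟩
      · have h1 : ‖Y‖ ≤ ‖Y₀‖ := hYmin Y₀ ⟨show F Y₀ = F Y₀ from rfl, by simp [Metric.mem_closedBall]⟩
        linarith
    refine ⟨Y, hYne, fun X => ?_⟩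
    set cc : ℝ → g := fun t => NormedSpace.exp (t • adE X) Y with hcc
    have hccL : ∀ t : ℝ, cc t ∈ Lset := by
      intro t
      have h := hinv X Y t
      show F (NormedSpace.exp (t • adE X) Y) = F Y₀
      rw [h, hYL]
    have hcc0 : cc 0 = Y := by
      rw [hcc]
      simp only [zero_smul]
      rw [NormedSpace.exp_zero]
      rfl
    have hccder : HasDerivAt cc ⁅X, Y⁆ 0 := by
      have h1 := (hasDerivAt_exp_smul_const (adE X) (0 : ℝ)).clm_apply
        (hasDerivAt_const (0 : ℝ) Y)
      simp only [zero_smul, NormedSpace.exp_zero, one_mul, map_zero, add_zero,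
        ContinuousLinearMap.mul_apply, ContinuousLinearMap.one_apply] at h1
      have h2 : adE X Y = ⁅X, Y⁆ := hadE X Y
      rw [h2] at h1
      exact h1
    have hder2 : HasDerivAt (fun t => (inner ℝ (cc t) (cc t) : ℝ))
        ((inner ℝ (cc 0) ⁅X, Y⁆ : ℝ) + (inner ℝ ⁅X, Y⁆ (cc 0) : ℝ)) 0 :=
      HasDerivAt.inner ℝ hccder hccder
    have hmin : IsLocalMin (fun t => (inner ℝ (cc t) (cc t) : ℝ)) 0 := by
      apply Filter.Eventually.of_forall
      intro t
      have h1 : ‖Y‖ ≤ ‖cc t‖ := hglobal (cc t) (hccL t)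
      have h2 : (inner ℝ (cc 0) (cc 0) : ℝ) = ‖Y‖ * ‖Y‖ := by
        rw [hcc0, real_inner_self_eq_norm_mul_norm]
      have h3 : (inner ℝ (cc t) (cc t) : ℝ) = ‖cc t‖ * ‖cc t‖ :=
        real_inner_self_eq_norm_mul_norm (cc t)
      show (inner ℝ (cc 0) (cc 0) : ℝ) ≤ (inner ℝ (cc t) (cc t) : ℝ)
      rw [h2, h3]
      exact mul_self_le_mul_self (norm_nonneg Y) h1
    have hzero := hmin.hasDerivAt_eq_zero hder2
    rw [hcc0] at hzero
    have hsy : (inner ℝ Y ⁅X, Y⁆ : ℝ) = (inner ℝ ⁅X, Y⁆ Y : ℝ) := (real_inner_comm Y ⁅X, Y⁆).symm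
    rw [hsy] at hzero
    have hfin : (inner ℝ ⁅X, Y⁆ Y : ℝ) = 0 := by linarith
    rw [hinner] at hfin
    exact hfin
  · -- easy case: the derived algebra is proper
    set D : Submodule ℝ g := (LieModule.lowerCentralSeries ℝ g g 1).toSubmodule with hDdef
    have hDne : D ≠ ⊤ := by
      intro h
      apply hD
      rw [← LieSubmodule.top_toSubmodule (R := ℝ) (L := g) (M := g),
        LieSubmodule.toSubmodule_inj] at h
      exact h
    have horth : Dᗮ ≠ ⊥ := by
      intro h
      apply hDne
      apply Submodule.eq_top_of_finrank_eq
      have h2 := Submodule.finrank_add_finrank_orthogonal D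
      rw [h, finrank_bot] at h2
      omega
    obtain ⟨Y, hYmem, hYne⟩ := Submodule.exists_mem_ne_zero_of_ne_bot horth
    refine ⟨Y, hYne, fun X => ?_⟩
    have hmem : ⁅X, Y⁆ ∈ D := by
      have : ⁅X, Y⁆ ∈ LieModule.lowerCentralSeries ℝ g g 1 := by
        rw [LieModule.lowerCentralSeries_succ]
        exact LieSubmodule.lie_mem_lie (LieSubmodule.mem_top X) (LieSubmodule.mem_top Y)
      exact this
    have := (Submodule.mem_orthogonal D Y).mp hYmem ⁅X, Y⁆ hmem
    rw [hinner] at this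
    exact this
end

section
/- Let 𝔤 be a finite-dimensional nilpotent real Lie algebra and let Y ∈ 𝔤 be nonzero. Then there exists an inner product on 𝔤 for which Y is a geodesic. -/
/-- If `g` is a finite-dimensional nilpotent real Lie algebra and `Y ≠ 0`,
then there is an inner product on `g` for which `Y` is a geodesic. -/
theorem nilpotent_exists_innerProduct_geodesic
    (g : Type*) [LieRing g] [LieAlgebra ℝ g] [FiniteDimensional ℝ g]
    [LieRing.IsNilpotent g]
    (Y : g) (hY : Y ≠ 0) :
    ∃ B : g →ₗ[ℝ] g →ₗ[ℝ] ℝ,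
      (∀ x y : g, B x y = B y x) ∧ (∀ x : g, x ≠ 0 → 0 < B x x) ∧
      (∀ X : g, B ⁅X, Y⁆ Y = 0) := by
  classical
  -- range of ad Y
  set W : Submodule ℝ g := LinearMap.range (LieAlgebra.ad ℝ g Y) with hW
  have hYW : Y ∉ W := by
    rintro ⟨Z, hZ⟩
    -- ⁅Y, Z⁆ = Y, so ad (-Z) has Y as a fixed vector, contradicting nilpotency
    have had : LieAlgebra.ad ℝ g (-Z) Y = Y := by
      rw [LieAlgebra.ad_apply] at hZ ⊢
      rw [neg_lie, lie_skew, hZ]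
    obtain ⟨n, hn⟩ := LieAlgebra.nilpotent_ad_of_nilpotent_algebra ℝ g
    have hn := hn (-Z)
    have hpow : ∀ k : ℕ, ((LieAlgebra.ad ℝ g (-Z)) ^ k) Y = Y := by
      intro k
      induction k with
      | zero => simp
      | succ k ih => rw [pow_succ, Module.End.mul_apply, had, ih]
    have := hpow n
    rw [hn] at this
    simp at this
    exact hY this.symm
  obtain ⟨f, hfY, hfW⟩ := W.exists_dual_map_eq_bot_of_notMem hYW inferInstance
  have hfW' : ∀ w ∈ W, f w = 0 := by
    intro w hw
    have : f w ∈ W.map f := Submodule.mem_map_of_mem hw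
    rwa [hfW, Submodule.mem_bot] at this
  -- normalize: f' Y = 1
  set f' : g →ₗ[ℝ] ℝ := (f Y)⁻¹ • f with hf'
  have hf'Y : f' Y = 1 := by simp [hf', inv_mul_cancel₀ hfY]
  have hf'W : ∀ w ∈ W, f' w = 0 := fun w hw => by simp [hf', hfW' w hw]
  -- projection P x = x - f' x • Y
  set P : g →ₗ[ℝ] g := LinearMap.id - f'.smulRight Y with hP
  have hPY : P Y = 0 := by simp [hP, hf'Y]
  -- base inner product via a basis
  obtain ⟨s, ⟨b⟩⟩ := Module.Basis.exists_basis ℝ g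
  have hfin : Fintype s := FiniteDimensional.fintypeBasisIndex b
  set B0 : g →ₗ[ℝ] g →ₗ[ℝ] ℝ :=
    LinearMap.mk₂ ℝ (fun x y => ∑ i, b.repr x i * b.repr y i)
      (fun x x' y => by simp [add_mul, Finset.sum_add_distrib])
      (fun c x y => by simp [Finset.mul_sum]; exact Finset.sum_congr rfl fun i _ => by ring)
      (fun x y y' => by simp [mul_add, Finset.sum_add_distrib])
      (fun c x y => by simp [Finset.mul_sum]; exact Finset.sum_congr rfl fun i _ => by ring) with hB0
  refine ⟨LinearMap.mk₂ ℝ (fun x y => f' x * f' y + B0 (P x) (P y))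
    (fun x x' y => by simp [map_add, add_mul]; ring)
    (fun c x y => by simp [map_smul]; ring)
    (fun x y y' => by simp [map_add, mul_add]; ring)
    (fun c x y => by simp [map_smul]; ring), ?_, ?_, ?_⟩
  · intro x y
    simp only [LinearMap.mk₂_apply]
    have : B0 (P x) (P y) = B0 (P y) (P x) := by
      simp [hB0, mul_comm]
    rw [this]; ring
  · intro x hx
    simp only [LinearMap.mk₂_apply]
    have h1 : 0 ≤ f' x * f' x := mul_self_nonneg _
    have h2 : 0 ≤ B0 (P x) (P x) := by
      simp only [hB0, LinearMap.mk₂_apply]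
      exact Finset.sum_nonneg fun i _ => mul_self_nonneg _
    rcases eq_or_ne (f' x) 0 with hfx | hfx
    · have hPx : P x ≠ 0 := by
        intro hPx
        apply hx
        have : x - f' x • Y = 0 := hPx
        rw [hfx, zero_smul, sub_zero] at this
        exact this
      have : 0 < B0 (P x) (P x) := by
        simp only [hB0, LinearMap.mk₂_apply]
        obtain ⟨i, hi⟩ : ∃ i, b.repr (P x) i ≠ 0 := by
          by_contra h
          push_neg at h
          exact hPx (b.repr.map_eq_zero_iff.mp (by ext i; exact h i))
        exact Finset.sum_pos' (fun j _ => mul_self_nonneg _)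
          ⟨i, Finset.mem_univ i, mul_self_pos.mpr hi⟩
      linarith
    · have : 0 < f' x * f' x := mul_self_pos.mpr hfx
      linarith
  · intro X
    simp only [LinearMap.mk₂_apply]
    have hmem : ⁅X, Y⁆ ∈ W := by
      refine ⟨-X, ?_⟩
      rw [LieAlgebra.ad_apply, ← lie_skew, neg_lie, neg_neg]
    rw [hf'W _ hmem, hPY, map_zero, zero_mul, zero_add]
end

section
/- Let 𝔤 be a finite-dimensional nonabelian nilpotent real Lie algebra. The following are equivalent: (a) for every inner product ⟨·,·⟩ on 𝔤, the set of geodesics of 𝔤 is exactly the set of nonzero vectors orthogonal to the derived algebra [𝔤,𝔤] together with the nonzero vectors contained in the centre z(𝔤); (b) 𝔤 is 2-step nilpotent (i.e. [[𝔤,𝔤],𝔤] = 0) and for every X ∈ 𝔤 with X ∉ z(𝔤), the adjoint map ad(X) maps 𝔤 onto [𝔤,𝔤]. -/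
private lemma geo_aux_mem_ds1 {g : Type*} [LieRing g] [LieAlgebra ℝ g] (x y : g) :
    ⁅x, y⁆ ∈ LieAlgebra.derivedSeries ℝ g 1 := by
  rw [LieAlgebra.derivedSeries_def, LieAlgebra.derivedSeriesOfIdeal_succ,
    LieAlgebra.derivedSeriesOfIdeal_zero]
  exact LieSubmodule.lie_mem_lie (LieSubmodule.mem_top x) (LieSubmodule.mem_top y)

private lemma geo_aux_eigen {g : Type*} [LieRing g] [LieAlgebra ℝ g]
    [LieRing.IsNilpotent g] {X Z : g} (h : ⁅Z, X⁆ = -X) : X = 0 := by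
  obtain ⟨k, hk⟩ := LieModule.IsNilpotent.nilpotent ℝ g g
  have hmem : ∀ n, X ∈ LieModule.lowerCentralSeries ℝ g g n := by
    intro n
    induction n with
    | zero => exact LieSubmodule.mem_top X
    | succ n ih =>
      have h2 : ⁅Z, X⁆ ∈ LieModule.lowerCentralSeries ℝ g g (n + 1) := by
        rw [LieModule.lowerCentralSeries_succ]
        exact LieSubmodule.lie_mem_lie (LieSubmodule.mem_top Z) ih
      rw [h] at h2
      simpa using neg_mem h2
  have := hmem k
  rw [hk] at this
  simpa using this

private lemma geo_aux_dual {g : Type*} [AddCommGroup g] [Module ℝ g]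
    (V : Submodule ℝ g) (X W : g) (hX : X ∉ V) (hW : W ∉ V) :
    ∃ f : g →ₗ[ℝ] ℝ, f X = 1 ∧ f W ≠ 0 ∧ ∀ v ∈ V, f v = 0 := by
  classical
  have hX' : V.mkQ X ≠ 0 := by
    rwa [Ne, Submodule.mkQ_apply, Submodule.Quotient.mk_eq_zero]
  have hW' : V.mkQ W ≠ 0 := by
    rwa [Ne, Submodule.mkQ_apply, Submodule.Quotient.mk_eq_zero]
  obtain ⟨φ₁, hφ₁⟩ : ∃ φ : Module.Dual ℝ (g ⧸ V), φ (V.mkQ X) ≠ 0 := by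
    by_contra hcon
    push_neg at hcon
    exact hX' ((Module.forall_dual_apply_eq_zero_iff ℝ _).mp hcon)
  obtain ⟨φ₂, hφ₂⟩ : ∃ φ : Module.Dual ℝ (g ⧸ V), φ (V.mkQ W) ≠ 0 := by
    by_contra hcon
    push_neg at hcon
    exact hW' ((Module.forall_dual_apply_eq_zero_iff ℝ _).mp hcon)
  simp only [Submodule.mkQ_apply] at hφ₁ hφ₂
  obtain ⟨f₀, hf₀X, hf₀W⟩ : ∃ φ : Module.Dual ℝ (g ⧸ V),
      φ (Submodule.Quotient.mk X) ≠ 0 ∧ φ (Submodule.Quotient.mk W) ≠ 0 := by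
    by_cases h1 : φ₁ (Submodule.Quotient.mk W : g ⧸ V) ≠ 0
    · exact ⟨φ₁, hφ₁, h1⟩
    · push_neg at h1
      by_cases h2 : φ₂ (Submodule.Quotient.mk X : g ⧸ V) = 0
      · refine ⟨φ₁ + φ₂, ?_, ?_⟩
        · simpa [h2] using hφ₁
        · simpa [h1] using hφ₂
      · refine ⟨φ₁ + (φ₁ (Submodule.Quotient.mk X : g ⧸ V) /
            φ₂ (Submodule.Quotient.mk X : g ⧸ V)) • φ₂, ?_, ?_⟩
        · have heq : φ₁ (Submodule.Quotient.mk X : g ⧸ V) +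
              φ₁ (Submodule.Quotient.mk X : g ⧸ V) / φ₂ (Submodule.Quotient.mk X : g ⧸ V) *
                φ₂ (Submodule.Quotient.mk X : g ⧸ V)
              = 2 * φ₁ (Submodule.Quotient.mk X : g ⧸ V) := by
            rw [div_mul_cancel₀ _ h2]; ring
          simp only [LinearMap.add_apply, LinearMap.smul_apply, smul_eq_mul, heq]
          intro hcon
          apply hφ₁
          have := mul_eq_zero.mp hcon
          simpa using this
        · simp only [LinearMap.add_apply, LinearMap.smul_apply, smul_eq_mul, h1, zero_add]
          exact mul_ne_zero (div_ne_zero hφ₁ h2) hφ₂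
  refine ⟨(f₀ (Submodule.Quotient.mk X : g ⧸ V))⁻¹ • (f₀ ∘ₗ V.mkQ), ?_, ?_, ?_⟩
  · simp [Submodule.mkQ_apply, inv_mul_cancel₀ hf₀X]
  · simp only [LinearMap.smul_apply, LinearMap.comp_apply, smul_eq_mul, Submodule.mkQ_apply]
    exact mul_ne_zero (inv_ne_zero hf₀X) hf₀W
  · intro v hv
    have : V.mkQ v = 0 := by rwa [Submodule.mkQ_apply, Submodule.Quotient.mk_eq_zero]
    simp [this]

private lemma geo_aux_inner {g : Type*} [AddCommGroup g] [Module ℝ g] [FiniteDimensional ℝ g]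
    (Y : g) (f : g →ₗ[ℝ] ℝ) (hfY : f Y = 1) :
    ∃ B : g →ₗ[ℝ] g →ₗ[ℝ] ℝ, (∀ x y : g, B x y = B y x) ∧
      (∀ x : g, x ≠ 0 → 0 < B x x) ∧ (∀ w : g, B Y w = f w) := by
  classical
  let b := Module.finBasis ℝ g
  let B₀ : g →ₗ[ℝ] g →ₗ[ℝ] ℝ :=
    ∑ i, LinearMap.smulRight (b.coord i) (b.coord i)
  have hB₀ : ∀ x y : g, B₀ x y = ∑ i, b.coord i x * b.coord i y := by
    intro x y
    simp [B₀, LinearMap.sum_apply, smul_eq_mul]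
  have hB₀sym : ∀ x y : g, B₀ x y = B₀ y x := by
    intro x y; rw [hB₀, hB₀]; exact Finset.sum_congr rfl fun i _ => mul_comm _ _
  have hB₀nonneg : ∀ x : g, 0 ≤ B₀ x x := by
    intro x; rw [hB₀]; exact Finset.sum_nonneg fun i _ => mul_self_nonneg _
  have hB₀pos : ∀ x : g, x ≠ 0 → 0 < B₀ x x := by
    intro x hx
    rw [hB₀]
    obtain ⟨i, hi⟩ : ∃ i, b.coord i x ≠ 0 := by
      by_contra hcon
      push_neg at hcon
      exact hx ((Module.Basis.forall_coord_eq_zero_iff b).mp hcon)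
    exact Finset.sum_pos' (fun j _ => mul_self_nonneg _)
      ⟨i, Finset.mem_univ i, mul_self_pos.mpr hi⟩
  let L : g →ₗ[ℝ] g := LinearMap.id - LinearMap.smulRight f Y
  have hL : ∀ x : g, L x = x - f x • Y := fun x => rfl
  have hLY : L Y = 0 := by rw [hL, hfY, one_smul, sub_self]
  refine ⟨B₀.compl₁₂ L L + LinearMap.smulRight f f, ?_, ?_, ?_⟩
  · intro x y
    simp only [LinearMap.add_apply, LinearMap.compl₁₂_apply, LinearMap.smulRight_apply,
      LinearMap.smul_apply, smul_eq_mul]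
    rw [hB₀sym, mul_comm]
  · intro x hx
    simp only [LinearMap.add_apply, LinearMap.compl₁₂_apply, LinearMap.smulRight_apply,
      LinearMap.smul_apply, smul_eq_mul]
    by_cases hfx : f x = 0
    · have : L x = x := by rw [hL, hfx, zero_smul, sub_zero]
      rw [this, hfx, mul_zero, add_zero]
      exact hB₀pos x hx
    · have h1 : 0 < f x * f x := mul_self_pos.mpr hfx
      have h2 : 0 ≤ B₀ (L x) (L x) := hB₀nonneg _
      linarith
  · intro w
    simp only [LinearMap.add_apply, LinearMap.compl₁₂_apply, LinearMap.smulRight_apply,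
      LinearMap.smul_apply, smul_eq_mul, hLY, hfY, one_mul, map_zero, LinearMap.zero_apply,
      zero_add]

/-- For a nonabelian finite-dimensional nilpotent real Lie algebra `g`, the
following are equivalent: (a) for every inner product, the geodesics are exactly the
nonzero vectors orthogonal to `[g,g]` together with the nonzero central vectors; (b) `g` is
2-step nilpotent and `ad X` is onto `[g,g]` for every non-central `X`. -/
theorem geodesics_exactly_orthogonal_or_central_iff
    (g : Type*) [LieRing g] [LieAlgebra ℝ g] [FiniteDimensional ℝ g]
    [LieRing.IsNilpotent g]
    (hnonab : ¬ IsLieAbelian g) :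
    (∀ B : g →ₗ[ℝ] g →ₗ[ℝ] ℝ,
      (∀ x y : g, B x y = B y x) → (∀ x : g, x ≠ 0 → 0 < B x x) →
      ∀ Y : g, Y ≠ 0 →
        ((∀ X : g, B ⁅X, Y⁆ Y = 0) ↔
          ((∀ W ∈ LieAlgebra.derivedSeries ℝ g 1, B Y W = 0) ∨
            Y ∈ LieAlgebra.center ℝ g))) ↔
    ((∀ x y z : g, ⁅⁅x, y⁆, z⁆ = 0) ∧
      ∀ X : g, X ∉ LieAlgebra.center ℝ g →
        ∀ W ∈ LieAlgebra.derivedSeries ℝ g 1, ∃ Z : g, ⁅X, Z⁆ = W) := by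
  constructor
  · intro hA
    have hsurj : ∀ X : g, X ∉ LieAlgebra.center ℝ g →
        ∀ W ∈ LieAlgebra.derivedSeries ℝ g 1, ∃ Z : g, ⁅X, Z⁆ = W := by
      intro X hX W hW
      by_contra hcon
      push_neg at hcon
      set V : Submodule ℝ g := LinearMap.range (LieAlgebra.ad ℝ g X) with hVdef
      have hWV : W ∉ V := by
        rintro ⟨Z, hZ⟩
        exact hcon Z (by simpa [LieAlgebra.ad_apply] using hZ)
      have hXV : X ∉ V := by
        rintro ⟨Z, hZ⟩
        have hXZ : ⁅X, Z⁆ = X := by simpa [LieAlgebra.ad_apply] using hZ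
        have h1 : ⁅Z, X⁆ = -X := by rw [← lie_skew, hXZ]
        have h0 : X = 0 := geo_aux_eigen h1
        exact hX (h0 ▸ (LieAlgebra.center ℝ g).zero_mem)
      obtain ⟨f, hfX, hfW, hfV⟩ := geo_aux_dual V X W hXV hWV
      obtain ⟨B, hsym, hpos, hBX⟩ := geo_aux_inner X f hfX
      have hXne : X ≠ 0 := fun h => hX (h ▸ (LieAlgebra.center ℝ g).zero_mem)
      have hgeo : ∀ Z : g, B ⁅Z, X⁆ X = 0 := by
        intro Z
        rw [hsym, hBX]
        apply hfV
        refine ⟨-Z, ?_⟩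
        rw [LieAlgebra.ad_apply, ← lie_skew, neg_lie, neg_neg]
      rcases (hA B hsym hpos X hXne).mp hgeo with horth | hc
      · exact hfW (by rw [← hBX W]; exact horth W hW)
      · exact hX hc
    refine ⟨?_, hsurj⟩
    intro x y z
    by_contra hne
    have hWc : ⁅x, y⁆ ∉ LieAlgebra.center ℝ g := by
      intro hc
      have h0 : ⁅z, ⁅x, y⁆⁆ = 0 := (LieModule.mem_maxTrivSubmodule ℝ g g ⁅x, y⁆).mp hc z
      apply hne
      rw [← lie_skew, h0, neg_zero]
    have hWD : ⁅x, y⁆ ∈ LieAlgebra.derivedSeries ℝ g 1 := geo_aux_mem_ds1 x y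
    have hchain : ∀ n, ∀ w ∈ LieAlgebra.derivedSeries ℝ g 1,
        w ∈ LieModule.lowerCentralSeries ℝ g g n := by
      intro n
      induction n with
      | zero => intro w _; exact LieSubmodule.mem_top w
      | succ n ih =>
        intro w hw
        obtain ⟨Z, hZ⟩ := hsurj ⁅x, y⁆ hWc w hw
        have h1 : ⁅Z, ⁅x, y⁆⁆ ∈ LieModule.lowerCentralSeries ℝ g g (n + 1) := by
          rw [LieModule.lowerCentralSeries_succ]
          exact LieSubmodule.lie_mem_lie (LieSubmodule.mem_top Z) (ih ⁅x, y⁆ hWD)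
        have h2 : w = -⁅Z, ⁅x, y⁆⁆ := by rw [← hZ, ← lie_skew]
        rw [h2]
        exact neg_mem h1
    obtain ⟨k, hk⟩ := LieModule.IsNilpotent.nilpotent ℝ g g
    have hbot := hchain k ⁅x, y⁆ hWD
    rw [hk] at hbot
    have hW0 : ⁅x, y⁆ = 0 := by simpa using hbot
    exact hne (by rw [hW0, zero_lie])
  · rintro ⟨h2, hsurj⟩ B hsym hpos Y hY
    constructor
    · intro hgeo
      by_cases hc : Y ∈ LieAlgebra.center ℝ g
      · exact Or.inr hc
      · refine Or.inl fun W hW => ?_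
        obtain ⟨Z, hZ⟩ := hsurj Y hc W hW
        have he : ⁅-Z, Y⁆ = W := by rw [neg_lie, lie_skew, hZ]
        have := hgeo (-Z)
        rw [he] at this
        rw [hsym]
        exact this
    · rintro (horth | hc) X
      · rw [hsym]
        exact horth _ (geo_aux_mem_ds1 X Y)
      · have h0 : ⁅X, Y⁆ = 0 := (LieModule.mem_maxTrivSubmodule ℝ g g Y).mp hc X
        rw [h0]
        simp
end

section
/- Let 𝔤 be a nilpotent metric Lie algebra and let 𝔥 be a totally geodesic subalgebra of 𝔤 of codimension 1. Then 𝔥 is a Lie ideal of 𝔤 and the orthogonal complement 𝔥⊥ is contained in the centre z(𝔤); consequently 𝔤 is the direct sum of the Lie ideals 𝔥 and 𝔥⊥, with 𝔥⊥ one-dimensional and central (so 𝔤 ≅ 𝔥 ⊕ ℝ). -/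
/-- A `B`-skew-adjoint nilpotent endomorphism of a space with a positive-definite
bilinear form is zero. -/
lemma skew_nilpotent_eq_zero {g : Type*} [AddCommGroup g] [Module ℝ g]
    (B : g →ₗ[ℝ] g →ₗ[ℝ] ℝ) (hpos : ∀ x : g, x ≠ 0 → 0 < B x x)
    (T : g →ₗ[ℝ] g) (hskew : ∀ v w : g, B (T v) w = - B v (T w))
    (n : ℕ) (hn : T ^ n = 0) : T = 0 := by
  have hmove : ∀ (k : ℕ) (v w : g), B ((T ^ k) v) w = (-1 : ℝ) ^ k * B v ((T ^ k) w) := by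
    intro k
    induction k with
    | zero => intro v w; simp
    | succ k ih =>
      intro v w
      have h1 : (T ^ (k + 1)) v = (T ^ k) (T v) := by rw [pow_succ]; rfl
      have h2 : (T ^ (k + 1)) w = T ((T ^ k) w) := by rw [pow_succ']; rfl
      rw [h1, h2, ih (T v) w, hskew]
      ring
  have halve : ∀ m : ℕ, T ^ (2 * m) = 0 → T ^ m = 0 := by
    intro m hm
    ext v
    have hz : B ((T ^ m) v) ((T ^ m) v) = 0 := by
      rw [hmove m v ((T ^ m) v)]
      have h0 : (T ^ m) ((T ^ m) v) = 0 := by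
        have he : (T ^ m) ((T ^ m) v) = (T ^ (2 * m)) v := by rw [two_mul, pow_add]; rfl
        rw [he, hm]; rfl
      rw [h0]
      simp
    by_contra hne
    exact absurd hz (ne_of_gt (hpos _ hne))
  have key : ∀ j : ℕ, T ^ (2 ^ j) = 0 → T = 0 := by
    intro j
    induction j with
    | zero => intro hj; simpa using hj
    | succ j ih =>
      intro hj
      exact ih (halve _ (by rwa [← pow_succ']))
  apply key n
  have h2n : n ≤ 2 ^ n := Nat.le_of_lt (Nat.lt_two_pow_self (n := n))
  calc T ^ (2 ^ n) = T ^ n * T ^ (2 ^ n - n) := by rw [← pow_add, Nat.add_sub_cancel' h2n]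
  _ = 0 := by rw [hn, zero_mul]

/-- A codimension-one totally geodesic subalgebra `h` of a nilpotent metric
Lie algebra `g` is an ideal, and its orthogonal complement is contained in the centre
(hence `g ≅ h ⊕ ℝ` as a direct sum of ideals). -/
theorem codim_one_totallyGeodesic_nilpotent
    (g : Type*) [LieRing g] [LieAlgebra ℝ g] [FiniteDimensional ℝ g]
    [LieModule.IsNilpotent g g]
    (B : g →ₗ[ℝ] g →ₗ[ℝ] ℝ)
    (hsymm : ∀ x y : g, B x y = B y x)
    (hpos : ∀ x : g, x ≠ 0 → 0 < B x x)
    (h : LieSubalgebra ℝ g)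
    (hcodim : Module.finrank ℝ h + 1 = Module.finrank ℝ g)
    (htg : ∀ X : g, (∀ W ∈ h, B X W = 0) →
      ∀ Y ∈ h, ∀ Z ∈ h, B ⁅X, Y⁆ Z + B ⁅X, Z⁆ Y = 0) :
    (∀ x : g, ∀ y ∈ h, ⁅x, y⁆ ∈ h) ∧
      (∀ X : g, (∀ W ∈ h, B X W = 0) → X ∈ LieAlgebra.center ℝ g) := by
  classical
  -- Main claim: a nonzero vector orthogonal to `h` is central.
  have key : ∀ X : g, X ≠ 0 → (∀ W ∈ h, B X W = 0) → ∀ v : g, ⁅X, v⁆ = 0 := by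
    intro X hX0 horth
    have hBXX : (0:ℝ) < B X X := hpos X hX0
    have hBXXne : B X X ≠ 0 := ne_of_gt hBXX
    have hinf : (h.toSubmodule ⊓ (ℝ ∙ X)) = ⊥ := by
      rw [eq_bot_iff]
      rintro u ⟨hu1, hu2⟩
      obtain ⟨c, rfl⟩ := Submodule.mem_span_singleton.mp hu2
      have hz : B X (c • X) = 0 := horth _ hu1
      rw [map_smul, smul_eq_mul] at hz
      rcases mul_eq_zero.mp hz with hc | hc
      · simp [hc]
      · exact absurd hc hBXXne
    have hsup : (h.toSubmodule ⊔ (ℝ ∙ X)) = ⊤ := by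
      apply Submodule.eq_top_of_finrank_eq
      have hd := Submodule.finrank_sup_add_finrank_inf_eq h.toSubmodule (ℝ ∙ X)
      rw [hinf, finrank_bot, add_zero, finrank_span_singleton hX0] at hd
      rw [hd]
      exact hcodim
    -- projection onto h along X
    have hproj : ∀ u : g, u - ((B X X)⁻¹ * B X u) • X ∈ h.toSubmodule := by
      intro u
      have hu : u ∈ h.toSubmodule ⊔ (ℝ ∙ X) := hsup ▸ Submodule.mem_top
      obtain ⟨w, hw, z, hz, rfl⟩ := Submodule.mem_sup.mp hu
      obtain ⟨c, rfl⟩ := Submodule.mem_span_singleton.mp hz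
      have hBw : B X w = 0 := horth w hw
      have hBu : B X (w + c • X) = c * B X X := by
        rw [map_add, hBw, map_smul, smul_eq_mul, zero_add]
      rw [hBu]
      have he : w + c • X - ((B X X)⁻¹ * (c * B X X)) • X = w := by
        rw [mul_comm c (B X X), ← mul_assoc, inv_mul_cancel₀ hBXXne, one_mul]
        abel
      rw [he]
      exact hw
    set S : g →ₗ[ℝ] g := LieModule.toEnd ℝ g g X with hS
    set T : g →ₗ[ℝ] g := S - ((B X X)⁻¹ • ((B X).comp S)).smulRight X with hT
    have hTapply : ∀ v : g, T v = ⁅X, v⁆ - ((B X X)⁻¹ * B X ⁅X, v⁆) • X := by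
      intro v
      simp [hT, hS, LieModule.toEnd_apply_apply, smul_smul]
    have hTX : T X = 0 := by
      rw [hTapply, lie_self]
      simp
    have hTmem : ∀ v : g, T v ∈ h.toSubmodule := by
      intro v
      rw [hTapply]
      exact hproj _
    have hTorthX : ∀ v : g, B (T v) X = 0 := by
      intro v
      rw [hTapply, map_sub, LinearMap.sub_apply, map_smul, LinearMap.smul_apply,
        smul_eq_mul, hsymm ⁅X, v⁆ X]
      field_simp
      simp
    have hskew' : ∀ v w : g, B (T v) w + B (T w) v = 0 := by
      have hhh : ∀ a ∈ h.toSubmodule, ∀ b ∈ h.toSubmodule, B (T a) b + B (T b) a = 0 := by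
        intro a ha b hb
        have hBa : B X b = 0 := horth b hb
        have hBb : B X a = 0 := horth a ha
        have h1 : B (T a) b = B ⁅X, a⁆ b := by
          rw [hTapply, map_sub, LinearMap.sub_apply, map_smul, LinearMap.smul_apply,
            smul_eq_mul, hBa, mul_zero, sub_zero]
        have h2 : B (T b) a = B ⁅X, b⁆ a := by
          rw [hTapply, map_sub, LinearMap.sub_apply, map_smul, LinearMap.smul_apply,
            smul_eq_mul, hBb, mul_zero, sub_zero]
        rw [h1, h2]
        exact htg X horth a ha b hb
      intro v w
      have hv : v ∈ h.toSubmodule ⊔ (ℝ ∙ X) := hsup ▸ Submodule.mem_top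
      obtain ⟨a, ha, z, hz, rfl⟩ := Submodule.mem_sup.mp hv
      obtain ⟨c, rfl⟩ := Submodule.mem_span_singleton.mp hz
      have hw : w ∈ h.toSubmodule ⊔ (ℝ ∙ X) := hsup ▸ Submodule.mem_top
      obtain ⟨b, hb, z', hz', rfl⟩ := Submodule.mem_sup.mp hw
      obtain ⟨d, rfl⟩ := Submodule.mem_span_singleton.mp hz'
      have hTv : T (a + c • X) = T a := by rw [map_add, map_smul, hTX, smul_zero, add_zero]
      have hTw : T (b + d • X) = T b := by rw [map_add, map_smul, hTX, smul_zero, add_zero]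
      rw [hTv, hTw, map_add, map_add, map_smul, map_smul, smul_eq_mul, smul_eq_mul,
        hTorthX a, hTorthX b, mul_zero, mul_zero, add_zero, add_zero]
      exact hhh a ha b hb
    have hskew : ∀ v w : g, B (T v) w = - B v (T w) := by
      intro v w
      have h1 := hskew' v w
      rw [hsymm (T w) v] at h1
      linarith
    obtain ⟨n, hSn⟩ := LieModule.isNilpotent_toEnd_of_isNilpotent ℝ g g X
    have hTP : ∀ (k : ℕ) (v : g),
        (T ^ (k + 1)) v = (S ^ (k + 1)) v - ((B X X)⁻¹ * B X ((S ^ (k + 1)) v)) • X := by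
      intro k
      induction k with
      | zero =>
        intro v
        show (T ^ 1) v = (S ^ 1) v - ((B X X)⁻¹ * B X ((S ^ 1) v)) • X
        rw [pow_one, pow_one, hTapply]
        rfl
      | succ k ih =>
        intro v
        have h1 : (T ^ (k + 2)) v = T ((T ^ (k + 1)) v) := by rw [pow_succ']; rfl
        have h2 : (S ^ (k + 2)) v = S ((S ^ (k + 1)) v) := by rw [pow_succ']; rfl
        rw [h1, ih v, map_sub, map_smul, hTX, smul_zero, sub_zero, h2, hTapply]
        rfl
    have hTn : T ^ (n + 1) = 0 := by
      ext v
      have hSv : (S ^ (n + 1)) v = 0 := by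
        have : (S ^ (n + 1)) v = (S ^ n) (S v) := by rw [pow_succ]; rfl
        rw [this, hSn]; rfl
      rw [hTP n v, hSv]
      simp
    have hT0 : T = 0 := skew_nilpotent_eq_zero B hpos T hskew (n + 1) hTn
    have hlie : ∀ v : g, ⁅X, v⁆ = ((B X X)⁻¹ * B X ⁅X, v⁆) • X := by
      intro v
      have h0 := hTapply v
      rw [hT0] at h0
      exact sub_eq_zero.mp h0.symm
    intro v
    set a : ℝ := (B X X)⁻¹ * B X ⁅X, v⁆ with ha
    have heq : ⁅X, v⁆ = a • X := hlie v
    obtain ⟨m, hm⟩ := LieModule.isNilpotent_toEnd_of_isNilpotent ℝ g g v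
    have hiter : ∀ k : ℕ, ((LieModule.toEnd ℝ g g v) ^ k) X = ((-a) ^ k) • X := by
      intro k
      induction k with
      | zero => simp
      | succ k ih =>
        have h1 : ((LieModule.toEnd ℝ g g v) ^ (k + 1)) X
            = (LieModule.toEnd ℝ g g v) (((LieModule.toEnd ℝ g g v) ^ k) X) := by
          rw [pow_succ']; rfl
        rw [h1, ih, map_smul, LieModule.toEnd_apply_apply]
        have h2 : ⁅v, X⁆ = (-a) • X := by
          rw [← lie_skew, heq, neg_smul]
        rw [h2, smul_smul, ← pow_succ]
    have h0 : ((-a : ℝ) ^ m) • X = 0 := by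
      rw [← hiter, hm]; rfl
    rcases smul_eq_zero.mp h0 with h1 | h1
    · have ham : (-a : ℝ) = 0 := by
        by_contra hne
        exact (pow_ne_zero m hne) h1
      have haz : a = 0 := neg_eq_zero.mp ham
      rw [heq, haz, zero_smul]
    · exact absurd h1 hX0
  -- existence of a nonzero orthogonal vector
  obtain ⟨X₀, hX₀orth, hX₀ne⟩ :
      ∃ X : g, (∀ W ∈ h, B X W = 0) ∧ X ≠ 0 := by
    set f : g →ₗ[ℝ] (h.toSubmodule →ₗ[ℝ] ℝ) := B.compl₂ h.toSubmodule.subtype with hf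
    have hk : LinearMap.ker f ≠ ⊥ := by
      intro hbot
      have h1 := LinearMap.finrank_range_add_finrank_ker f
      rw [hbot, finrank_bot, add_zero] at h1
      have h2 : Module.finrank ℝ (LinearMap.range f)
          ≤ Module.finrank ℝ (h.toSubmodule →ₗ[ℝ] ℝ) := Submodule.finrank_le _
      rw [Module.finrank_linearMap, Module.finrank_self, mul_one] at h2
      have h3 : Module.finrank ℝ h.toSubmodule = Module.finrank ℝ h := rfl
      omega
    obtain ⟨X, hXk, hXne⟩ := Submodule.exists_mem_ne_zero_of_ne_bot hk
    refine ⟨X, ?_, hXne⟩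
    intro W hW
    have : f X = 0 := hXk
    have := LinearMap.congr_fun this ⟨W, hW⟩
    simpa [hf] using this
  constructor
  · intro x y hy
    have hx : x ∈ h.toSubmodule ⊔ (ℝ ∙ X₀) := by
      have hsup : (h.toSubmodule ⊔ (ℝ ∙ X₀)) = ⊤ := by
        apply Submodule.eq_top_of_finrank_eq
        have hinf : (h.toSubmodule ⊓ (ℝ ∙ X₀)) = ⊥ := by
          rw [eq_bot_iff]
          rintro u ⟨hu1, hu2⟩
          obtain ⟨c, rfl⟩ := Submodule.mem_span_singleton.mp hu2
          have hz : B X₀ (c • X₀) = 0 := hX₀orth _ hu1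
          rw [map_smul, smul_eq_mul] at hz
          rcases mul_eq_zero.mp hz with hc | hc
          · simp [hc]
          · exact absurd hc (ne_of_gt (hpos X₀ hX₀ne))
        have hd := Submodule.finrank_sup_add_finrank_inf_eq h.toSubmodule (ℝ ∙ X₀)
        rw [hinf, finrank_bot, add_zero, finrank_span_singleton hX₀ne] at hd
        rw [hd]
        exact hcodim
      rw [hsup]
      exact Submodule.mem_top
    obtain ⟨w, hw, z, hz, rfl⟩ := Submodule.mem_sup.mp hx
    obtain ⟨c, rfl⟩ := Submodule.mem_span_singleton.mp hz
    have h1 : ⁅w + c • X₀, y⁆ = ⁅w, y⁆ + c • ⁅X₀, y⁆ := by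
      rw [add_lie, smul_lie]
    have h2 : ⁅X₀, y⁆ = 0 := key X₀ hX₀ne hX₀orth y
    rw [h1, h2, smul_zero, add_zero]
    exact h.lie_mem hw hy
  · intro X horth
    rw [LieModule.mem_maxTrivSubmodule]
    intro x
    by_cases hX0 : X = 0
    · rw [hX0, lie_zero]
    · have := key X hX0 horth x
      rw [← lie_skew, this, neg_zero]
end

section
/- Let 𝔤 be a metric Lie algebra and let 𝔥 be a totally geodesic subalgebra of 𝔤. Let π⊥ : 𝔤 → 𝔥⊥ denote the orthogonal projection onto 𝔥⊥, and define ψ : 𝔥 → End(𝔥⊥) by ψ(Y)(X) = π⊥([Y,X]) for Y ∈ 𝔥, X ∈ 𝔥⊥. Then ψ is a Lie algebra homomorphism (ψ([Y,Z]) = ψ(Y)∘ψ(Z) − ψ(Z)∘ψ(Y) for all Y, Z ∈ 𝔥), and if 𝔤 is nilpotent then ψ(Y) is a nilpotent endomorphism of 𝔥⊥ for every Y ∈ 𝔥. -/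
/-- For a totally geodesic subalgebra `h` of a metric Lie algebra `g`, the map
`ψ : h → End(h⊥)`, `ψ(Y)(X) = π⊥[Y,X]` (where `π⊥` is the orthogonal projection onto
`h⊥`), is a Lie algebra homomorphism, and if `g` is nilpotent then each `ψ(Y)` is a
nilpotent endomorphism of `h⊥`. -/
theorem psi_hom_and_nilpotent
    (g : Type*) [LieRing g] [LieAlgebra ℝ g] [FiniteDimensional ℝ g]
    (B : g →ₗ[ℝ] g →ₗ[ℝ] ℝ)
    (hsymm : ∀ x y : g, B x y = B y x)
    (hpos : ∀ x : g, x ≠ 0 → 0 < B x x)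
    (h : LieSubalgebra ℝ g)
    (htg : ∀ X : g, (∀ W ∈ h, B X W = 0) →
      ∀ Y ∈ h, ∀ Z ∈ h, B ⁅X, Y⁆ Z + B ⁅X, Z⁆ Y = 0)
    (pperp : g →ₗ[ℝ] g)
    (hproj₁ : ∀ x : g, ∀ w ∈ h, B (pperp x) w = 0)
    (hproj₂ : ∀ x : g, x - pperp x ∈ h) :
    (∀ Y ∈ h, ∀ Z ∈ h, ∀ X : g, (∀ w ∈ h, B X w = 0) →
      pperp ⁅⁅Y, Z⁆, X⁆ = pperp ⁅Y, pperp ⁅Z, X⁆⁆ - pperp ⁅Z, pperp ⁅Y, X⁆⁆) ∧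
    (LieRing.IsNilpotent g →
      ∀ Y ∈ h, ∃ k : ℕ, ∀ X : g, (∀ w ∈ h, B X w = 0) →
        (fun x : g => pperp ⁅Y, x⁆)^[k] X = 0) := by
  -- `pperp` kills elements of `h`
  have hsub : ∀ v ∈ h, pperp v = 0 := by
    intro v hv
    have hmem : pperp v ∈ h := by
      have : pperp v = v - (v - pperp v) := by abel
      rw [this]
      exact h.sub_mem hv (hproj₂ v)
    by_contra hne
    have h1 := hpos _ hne
    have h0 := hproj₁ v _ hmem
    linarith
  -- `pperp ⁅Y, a⁆` only depends on `pperp a`, for `Y ∈ h`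
  have hbr : ∀ Y ∈ h, ∀ a : g, pperp ⁅Y, pperp a⁆ = pperp ⁅Y, a⁆ := by
    intro Y hY a
    have hmem : ⁅Y, a - pperp a⁆ ∈ h := h.lie_mem hY (hproj₂ a)
    have h0 := hsub _ hmem
    have heq : ⁅Y, a⁆ = ⁅Y, pperp a⁆ + ⁅Y, a - pperp a⁆ := by
      rw [← lie_add]; congr 1; abel
    rw [heq, map_add, h0, add_zero]
  -- orthogonal elements are fixed by `pperp`
  have hfix : ∀ X : g, (∀ w ∈ h, B X w = 0) → pperp X = X := by
    intro X hX
    have hmem := hproj₂ X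
    have h0 : B (X - pperp X) (X - pperp X) = 0 := by
      have h1 := hX _ hmem
      have h2 := hproj₁ X _ hmem
      simp only [map_sub, LinearMap.sub_apply] at h1 h2 ⊢
      linarith
    by_contra hne
    have : X - pperp X ≠ 0 := fun hc => hne (by rw [sub_eq_zero] at hc; exact hc.symm)
    exact absurd h0 (ne_of_gt (hpos _ this))
  constructor
  · intro Y hY Z hZ X _
    have hjac : ⁅⁅Y, Z⁆, X⁆ = ⁅Y, ⁅Z, X⁆⁆ - ⁅Z, ⁅Y, X⁆⁆ := lie_lie Y Z X
    rw [hjac, map_sub, hbr Y hY, hbr Z hZ]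
  · intro hnil Y hY
    haveI := hnil
    obtain ⟨k, hk⟩ := LieAlgebra.nilpotent_ad_of_nilpotent_algebra ℝ g
    refine ⟨k, fun X hX => ?_⟩
    have key : ∀ n : ℕ, ∀ a : g,
        (fun x : g => pperp ⁅Y, x⁆)^[n] (pperp a) = pperp ((LieAlgebra.ad ℝ g Y ^ n) a) := by
      intro n
      induction n with
      | zero => intro a; simp
      | succ n ih =>
        intro a
        rw [Function.iterate_succ_apply]
        have h1 : pperp ⁅Y, pperp a⁆ = pperp ⁅Y, a⁆ := hbr Y hY a
        have h2 : (LieAlgebra.ad ℝ g Y ^ (n + 1)) a = (LieAlgebra.ad ℝ g Y ^ n) ⁅Y, a⁆ := by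
          rw [pow_succ]
          simp [Module.End.mul_apply, LieAlgebra.ad_apply]
        simp only [h1, h2]
        exact ih ⁅Y, a⁆
    have := key k X
    rw [hfix X hX] at this
    rw [this, hk Y, LinearMap.zero_apply, map_zero]
end

section
/- Let 𝔤 be a nilpotent metric Lie algebra and let 𝔥 be a totally geodesic subalgebra of 𝔤 of codimension 2. Then for every basis {X₁,X₂} of the orthogonal complement 𝔥⊥, the element [X₁,X₂] lies in 𝔥 and moreover lies in the centre of 𝔥, i.e. [[X₁,X₂],Y] = 0 for all Y ∈ 𝔥. -/
open Module LinearMap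

section Helpers

private lemma nilp_trace_zero {E : Type*} [AddCommGroup E] [Module ℝ E]
    [FiniteDimensional ℝ E] {f : E →ₗ[ℝ] E} (hf : IsNilpotent f) : LinearMap.trace ℝ E f = 0 :=
  (LinearMap.isNilpotent_trace_of_isNilpotent hf).eq_zero

private lemma trace_eq_sum_inner' {E : Type*} [NormedAddCommGroup E] [InnerProductSpace ℝ E]
    [FiniteDimensional ℝ E] {ι : Type*} [Fintype ι] [DecidableEq ι]
    (b : Basis ι ℝ E) (hb : Orthonormal ℝ (⇑b)) (f : E →ₗ[ℝ] E) :
    LinearMap.trace ℝ E f = ∑ i, inner ℝ (b i) (f (b i)) := by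
  rw [LinearMap.trace_eq_matrix_trace ℝ b f, Matrix.trace]
  refine Finset.sum_congr rfl fun i _ => ?_
  rw [Matrix.diag_apply, LinearMap.toMatrix_apply]
  conv_rhs => rw [← b.linearCombination_repr (f (b i))]
  rw [hb.inner_right_finsupp]

set_option maxHeartbeats 1600000 in
private theorem aux_ortho
    (g : Type*) [LieRing g] [LieAlgebra ℝ g] [FiniteDimensional ℝ g]
    [LieRing.IsNilpotent g]
    (B : g →ₗ[ℝ] g →ₗ[ℝ] ℝ)
    (hsymm : ∀ x y : g, B x y = B y x)
    (hpos : ∀ x : g, x ≠ 0 → 0 < B x x)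
    (h : LieSubalgebra ℝ g)
    (hcodim : Module.finrank ℝ h + 2 = Module.finrank ℝ g)
    (htg : ∀ X : g, (∀ W ∈ h, B X W = 0) →
      ∀ Y ∈ h, ∀ Z ∈ h, B ⁅X, Y⁆ Z + B ⁅X, Z⁆ Y = 0)
    (X₁ X₂ : g)
    (hX₁ : ∀ W ∈ h, B X₁ W = 0) (hX₂ : ∀ W ∈ h, B X₂ W = 0)
    (h11 : B X₁ X₁ = 1) (h22 : B X₂ X₂ = 1) (h12 : B X₁ X₂ = 0) :
    ⁅X₁, X₂⁆ ∈ h ∧ ∀ Y ∈ h, ⁅⁅X₁, X₂⁆, Y⁆ = 0 := by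
  classical
  have hnonneg : ∀ x : g, 0 ≤ B x x := by
    intro x
    by_cases hx : x = 0
    · simp [hx]
    · exact (hpos x hx).le
  let core : InnerProductSpace.Core ℝ g :=
  { inner := fun x y => B x y
    conj_inner_symm := fun x y => by simpa using hsymm y x
    re_inner_nonneg := fun x => hnonneg x
    add_left := fun x y z => by simp
    smul_left := fun x y r => by simp
    definite := fun x hx => by
      by_contra h0
      exact (hpos x h0).ne' hx }
  letI : NormedAddCommGroup g := core.toNormedAddCommGroup
  letI : InnerProductSpace ℝ g := InnerProductSpace.ofCore core.toCore
  have hinner : ∀ x y : g, inner ℝ x y = B x y := fun x y => rfl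
  -- the submodule H
  set H : Submodule ℝ g := h.toSubmodule with hHdef
  have hmemH : ∀ x : g, x ∈ H ↔ x ∈ h := fun x => Iff.rfl
  haveI : FiniteDimensional ℝ H := inferInstance
  let bH := stdOrthonormalBasis ℝ H
  -- the adapted family
  set v : (Fin (finrank ℝ H) ⊕ Fin 2) → g :=
    Sum.elim (fun i => ((bH i : H) : g)) ![X₁, X₂] with hvdef
  have hvh : ∀ i, ((bH i : H) : g) ∈ h := fun i => (bH i).2
  have hBmemr : ∀ j : Fin 2, ∀ W ∈ h, B (![X₁, X₂] j) W = 0 := by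
    intro j
    fin_cases j
    · exact hX₁
    · exact hX₂
  have hv : Orthonormal ℝ v := by
    rw [orthonormal_iff_ite]
    rintro (i | i) (j | j)
    · have horth := bH.orthonormal
      rw [orthonormal_iff_ite] at horth
      simp only [hvdef, Sum.elim_inl]
      rw [← Submodule.coe_inner, horth i j]
      simp
    · simp only [hvdef, Sum.elim_inl, Sum.elim_inr]
      rw [hinner, hsymm, hBmemr j _ (hvh i)]
      simp
    · simp only [hvdef, Sum.elim_inl, Sum.elim_inr]
      rw [hinner, hBmemr i _ (hvh j)]
      simp
    · fin_cases i <;> fin_cases j <;>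
        simp only [hvdef, Sum.elim_inr, hinner] <;> simp [h11, h22, h12, hsymm X₂ X₁]
  have hcard : Fintype.card (Fin (finrank ℝ H) ⊕ Fin 2) = finrank ℝ g := by
    simp only [Fintype.card_sum, Fintype.card_fin]
    exact hcodim
  let b : Basis (Fin (finrank ℝ H) ⊕ Fin 2) ℝ g :=
    basisOfLinearIndependentOfCardEqFinrank hv.linearIndependent hcard
  have hb : ⇑b = v := coe_basisOfLinearIndependentOfCardEqFinrank _ _
  have hvb : Orthonormal ℝ (⇑b) := by rw [hb]; exact hv
  -- trace formula on g
  have trace_formula : ∀ f : g →ₗ[ℝ] g,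
      LinearMap.trace ℝ g f
        = (∑ k, B ((bH k : H) : g) (f ((bH k : H) : g)))
          + (B X₁ (f X₁) + B X₂ (f X₂)) := by
    intro f
    rw [trace_eq_sum_inner' b hvb f, Fintype.sum_sum_type]
    simp only [hb, hvdef, Sum.elim_inl, Sum.elim_inr, hinner]
    rw [Fin.sum_univ_two]
    simp
  -- nilpotency of ad
  obtain ⟨N, hN⟩ := LieAlgebra.nilpotent_ad_of_nilpotent_algebra ℝ g
  have trace_ad : ∀ x : g, LinearMap.trace ℝ g (LieAlgebra.ad ℝ g x) = 0 :=
    fun x => nilp_trace_zero ⟨N, hN x⟩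
  -- diagonal vanishing from total geodesy
  have hdiag : ∀ X : g, (∀ W ∈ h, B X W = 0) → ∀ Y ∈ h, B ⁅X, Y⁆ Y = 0 := by
    intro X hX Y hY
    have := htg X hX Y hY Y hY
    linarith
  -- [X₁,X₂] is orthogonal to X₁ and X₂
  have hBc2 : B X₂ ⁅X₁, X₂⁆ = 0 := by
    have t := trace_ad X₁
    rw [trace_formula] at t
    have hs : (∑ k, B ((bH k : H) : g) (LieAlgebra.ad ℝ g X₁ ((bH k : H) : g))) = 0 := by
      refine Finset.sum_eq_zero fun k _ => ?_
      rw [LieAlgebra.ad_apply, hsymm]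
      exact hdiag X₁ hX₁ _ (hvh k)
    rw [hs, LieAlgebra.ad_apply, LieAlgebra.ad_apply, lie_self] at t
    simpa using t
  have hBc1 : B X₁ ⁅X₁, X₂⁆ = 0 := by
    have t := trace_ad X₂
    rw [trace_formula] at t
    have hs : (∑ k, B ((bH k : H) : g) (LieAlgebra.ad ℝ g X₂ ((bH k : H) : g))) = 0 := by
      refine Finset.sum_eq_zero fun k _ => ?_
      rw [LieAlgebra.ad_apply, hsymm]
      exact hdiag X₂ hX₂ _ (hvh k)
    rw [hs, LieAlgebra.ad_apply, LieAlgebra.ad_apply, lie_self] at t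
    simp only [map_zero, LinearMap.zero_apply, add_zero, zero_add] at t
    have e : ⁅X₂, X₁⁆ = -⁅X₁, X₂⁆ := by rw [← lie_skew]
    rw [e, map_neg, neg_eq_zero] at t
    exact t
  -- membership criterion
  have mem_of_orth : ∀ x : g, B X₁ x = 0 → B X₂ x = 0 → x ∈ h := by
    intro x h1 h2
    have hrepr : ∀ i, b.repr x i = B (v i) x := by
      intro i
      have : inner ℝ (v i) x = b.repr x i := by
        conv_lhs => rw [← b.linearCombination_repr x]
        rw [← hb]
        exact hvb.inner_right_finsupp _ i
      rw [← this, hinner]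
    have hx : x = ∑ i, b.repr x i • v i := by
      conv_lhs => rw [← b.sum_repr x]
      simp [hb]
    rw [← hmemH x, hx]
    refine Submodule.sum_mem _ ?_
    rintro (i | j) -
    · exact Submodule.smul_mem _ _ ((hmemH _).2 (hvh i))
    · have hz : b.repr x (Sum.inr j) = 0 := by
        rw [hrepr]
        simp only [hvdef, Sum.elim_inr]
        fin_cases j
        · simpa using h1
        · simpa using h2
      rw [hz, zero_smul]
      exact Submodule.zero_mem _
  have hcmem : ⁅X₁, X₂⁆ ∈ h := mem_of_orth _ hBc1 hBc2
  -- restriction of ad to H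
  have hinvY : ∀ Y, Y ∈ h → ∀ x ∈ H, (LieAlgebra.ad ℝ g Y) x ∈ H := by
    intro Y hY x hx
    rw [LieAlgebra.ad_apply]
    exact h.lie_mem hY hx
  have hrestr_nil : ∀ (Y : g) (hY : Y ∈ h),
      IsNilpotent ((LieAlgebra.ad ℝ g Y).restrict (hinvY Y hY)) := by
    intro Y hY
    refine ⟨N, ?_⟩
    rw [Module.End.pow_restrict]
    apply LinearMap.ext
    intro x
    apply Subtype.ext
    rw [LinearMap.restrict_coe_apply, hN Y]
    simp
  have trace_restrict_formula : ∀ (Y : g) (hY : Y ∈ h),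
      LinearMap.trace ℝ H ((LieAlgebra.ad ℝ g Y).restrict (hinvY Y hY))
        = ∑ k, B ((bH k : H) : g) ⁅Y, ((bH k : H) : g)⁆ := by
    intro Y hY
    rw [trace_eq_sum_inner' bH.toBasis (by rw [bH.coe_toBasis]; exact bH.orthonormal)]
    refine Finset.sum_congr rfl fun k _ => ?_
    rw [Submodule.coe_inner, bH.coe_toBasis, hinner]
    congr 1
  -- the tau functional vanishes
  have tau : ∀ Y ∈ h, B X₁ ⁅Y, X₁⁆ + B X₂ ⁅Y, X₂⁆ = 0 := by
    intro Y hY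
    have t := trace_ad Y
    rw [trace_formula] at t
    have tr := nilp_trace_zero (hrestr_nil Y hY)
    rw [trace_restrict_formula Y hY] at tr
    have hs : (∑ k, B ((bH k : H) : g) ((LieAlgebra.ad ℝ g Y) ((bH k : H) : g))) = 0 := by
      simpa only [LieAlgebra.ad_apply] using tr
    rw [hs, LieAlgebra.ad_apply, LieAlgebra.ad_apply] at t
    linarith
  -- the projected operators A
  set A : g → g → g := fun X Y => ⁅X, Y⁆ - B X₁ ⁅X, Y⁆ • X₁ - B X₂ ⁅X, Y⁆ • X₂ with hAdef
  have hB21 : B X₂ X₁ = 0 := by rw [hsymm]; exact h12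
  have hAmem : ∀ X Y : g, A X Y ∈ h := by
    intro X Y
    refine mem_of_orth _ ?_ ?_
    · simp only [hAdef, map_sub, map_smul, smul_eq_mul]
      rw [h11, h12]
      ring
    · simp only [hAdef, map_sub, map_smul, smul_eq_mul]
      rw [hB21, h22]
      ring
  set c : g := ⁅X₁, X₂⁆ with hcdef
  -- key bracket identity
  have key : ∀ Y ∈ h, ⁅c, Y⁆ = ⁅X₁, A X₂ Y⁆ - ⁅X₂, A X₁ Y⁆ := by
    intro Y hY
    have j : ⁅c, Y⁆ = ⁅X₁, ⁅X₂, Y⁆⁆ - ⁅X₂, ⁅X₁, Y⁆⁆ := by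
      rw [hcdef, lie_lie]
    have e2 : ⁅X₂, Y⁆ = A X₂ Y + B X₁ ⁅X₂, Y⁆ • X₁ + B X₂ ⁅X₂, Y⁆ • X₂ := by
      simp only [hAdef]; abel
    have e1 : ⁅X₁, Y⁆ = A X₁ Y + B X₁ ⁅X₁, Y⁆ • X₁ + B X₂ ⁅X₁, Y⁆ • X₂ := by
      simp only [hAdef]; abel
    have htau : B X₂ ⁅X₂, Y⁆ + B X₁ ⁅X₁, Y⁆ = 0 := by
      have := tau Y hY
      have e1' : ⁅Y, X₁⁆ = -⁅X₁, Y⁆ := by rw [← lie_skew]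
      have e2' : ⁅Y, X₂⁆ = -⁅X₂, Y⁆ := by rw [← lie_skew]
      rw [e1', e2'] at this
      simp only [map_neg] at this
      linarith
    have expand2 : ⁅X₁, ⁅X₂, Y⁆⁆ = ⁅X₁, A X₂ Y⁆ + B X₂ ⁅X₂, Y⁆ • c := by
      conv_lhs => rw [e2]
      rw [lie_add, lie_add, lie_smul, lie_smul, lie_self, smul_zero, add_zero, ← hcdef]
    have expand1 : ⁅X₂, ⁅X₁, Y⁆⁆ = ⁅X₂, A X₁ Y⁆ - B X₁ ⁅X₁, Y⁆ • c := by
      conv_lhs => rw [e1]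
      rw [lie_add, lie_add, lie_smul, lie_smul, lie_self, smul_zero, add_zero]
      rw [show ⁅X₂, X₁⁆ = -⁅X₁, X₂⁆ by rw [← lie_skew], ← hcdef, smul_neg, ← sub_eq_add_neg]
    rw [j, expand2, expand1]
    rw [show (⁅X₁, A X₂ Y⁆ + B X₂ ⁅X₂, Y⁆ • c) - (⁅X₂, A X₁ Y⁆ - B X₁ ⁅X₁, Y⁆ • c)
        = (⁅X₁, A X₂ Y⁆ - ⁅X₂, A X₁ Y⁆) + (B X₂ ⁅X₂, Y⁆ + B X₁ ⁅X₁, Y⁆) • c by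
          rw [add_smul]; abel]
    rw [htau, zero_smul, add_zero]
  -- skewness of ad c on h
  have expand : ∀ Y ∈ h, ∀ Z ∈ h,
      B ⁅c, Y⁆ Z = - B (A X₁ Z) (A X₂ Y) + B (A X₂ Z) (A X₁ Y) := by
    intro Y hY Z hZ
    have step1 : B ⁅X₁, A X₂ Y⁆ Z = - B (A X₁ Z) (A X₂ Y) := by
      have ht := htg X₁ hX₁ (A X₂ Y) (hAmem X₂ Y) Z hZ
      have hd : B ⁅X₁, Z⁆ (A X₂ Y) = B (A X₁ Z) (A X₂ Y) := by
        have e : ⁅X₁, Z⁆ = A X₁ Z + B X₁ ⁅X₁, Z⁆ • X₁ + B X₂ ⁅X₁, Z⁆ • X₂ := by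
          simp only [hAdef]; abel
        rw [e]
        simp only [map_add, map_smul, LinearMap.add_apply, LinearMap.smul_apply, smul_eq_mul]
        rw [hX₁ _ (hAmem X₂ Y), hX₂ _ (hAmem X₂ Y)]
        ring
      rw [hd] at ht
      linarith
    have step2 : B ⁅X₂, A X₁ Y⁆ Z = - B (A X₂ Z) (A X₁ Y) := by
      have ht := htg X₂ hX₂ (A X₁ Y) (hAmem X₁ Y) Z hZ
      have hd : B ⁅X₂, Z⁆ (A X₁ Y) = B (A X₂ Z) (A X₁ Y) := by
        have e : ⁅X₂, Z⁆ = A X₂ Z + B X₁ ⁅X₂, Z⁆ • X₁ + B X₂ ⁅X₂, Z⁆ • X₂ := by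
          simp only [hAdef]; abel
        rw [e]
        simp only [map_add, map_smul, LinearMap.add_apply, LinearMap.smul_apply, smul_eq_mul]
        rw [hX₁ _ (hAmem X₁ Y), hX₂ _ (hAmem X₁ Y)]
        ring
      rw [hd] at ht
      linarith
    rw [key Y hY]
    simp only [map_sub, LinearMap.sub_apply]
    rw [step1, step2]
    ring
  have skew : ∀ Y ∈ h, ∀ Z ∈ h, B ⁅c, Y⁆ Z = - B ⁅c, Z⁆ Y := by
    intro Y hY Z hZ
    rw [expand Y hY Z hZ, expand Z hZ Y hY]
    rw [hsymm (A X₁ Y) (A X₂ Z), hsymm (A X₂ Y) (A X₁ Z)]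
    ring
  -- conclude: ad c vanishes on h
  have hinvc : ∀ x ∈ H, (LieAlgebra.ad ℝ g c) x ∈ H := hinvY c hcmem
  set T : H →ₗ[ℝ] H := (LieAlgebra.ad ℝ g c).restrict hinvc with hTdef
  have hTapp : ∀ x : H, ((T x : H) : g) = ⁅c, (x : g)⁆ := by
    intro x
    rw [hTdef, LinearMap.restrict_coe_apply, LieAlgebra.ad_apply]
  have hTnil : IsNilpotent T := hrestr_nil c hcmem
  have hT2nil : IsNilpotent (T ∘ₗ T) := by
    obtain ⟨k, hk⟩ := hTnil
    refine ⟨k, ?_⟩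
    rw [← Module.End.mul_eq_comp, ← pow_two, ← pow_mul, two_mul, pow_add, hk, mul_zero]
  have trT2 : LinearMap.trace ℝ H (T ∘ₗ T) = 0 := nilp_trace_zero hT2nil
  have trT2' : LinearMap.trace ℝ H (T ∘ₗ T)
      = ∑ k, - B ⁅c, ((bH k : H) : g)⁆ ⁅c, ((bH k : H) : g)⁆ := by
    rw [trace_eq_sum_inner' bH.toBasis (by rw [bH.coe_toBasis]; exact bH.orthonormal)]
    refine Finset.sum_congr rfl fun k _ => ?_
    have h1 : ((T (bH k) : H) : g) = ⁅c, ((bH k : H) : g)⁆ := hTapp _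
    have h2 : (((T ∘ₗ T) (bH k) : H) : g) = ⁅c, ⁅c, ((bH k : H) : g)⁆⁆ := by
      have h3 := hTapp (T (bH k))
      rw [h1] at h3
      rw [LinearMap.comp_apply]
      exact h3
    rw [Submodule.coe_inner, bH.coe_toBasis, h2, hinner]
    have hm : ⁅c, ((bH k : H) : g)⁆ ∈ h := h.lie_mem hcmem (hvh k)
    rw [hsymm, skew _ hm _ (hvh k)]
  rw [trT2', Finset.sum_neg_distrib, neg_eq_zero] at trT2
  have hsum : (∑ k, B ⁅c, ((bH k : H) : g)⁆ ⁅c, ((bH k : H) : g)⁆) = 0 := trT2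
  have hzero : ∀ k, ⁅c, ((bH k : H) : g)⁆ = 0 := by
    have := (Finset.sum_eq_zero_iff_of_nonneg
      (fun k _ => hnonneg ⁅c, ((bH k : H) : g)⁆)).1 hsum
    intro k
    by_contra hne
    exact (hpos _ hne).ne' (this k (Finset.mem_univ k))
  refine ⟨hcmem, ?_⟩
  intro Y hY
  have hphi : ((LieAlgebra.ad ℝ g c) ∘ₗ H.subtype) = 0 := by
    apply bH.toBasis.ext
    intro k
    rw [bH.coe_toBasis]
    simp only [LinearMap.comp_apply, Submodule.subtype_apply, LieAlgebra.ad_apply,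
      LinearMap.zero_apply]
    exact hzero k
  have := LinearMap.congr_fun hphi ⟨Y, hY⟩
  simpa [LieAlgebra.ad_apply] using this

end Helpers

/-- If `h` is a codimension-two totally geodesic subalgebra of a nilpotent
metric Lie algebra `g`, then for every basis `{X₁, X₂}` of `h⊥`, the bracket `[X₁,X₂]`
lies in `h` and is central in `h`. -/
theorem codim_two_bracket_central
    (g : Type*) [LieRing g] [LieAlgebra ℝ g] [FiniteDimensional ℝ g]
    [LieRing.IsNilpotent g]
    (B : g →ₗ[ℝ] g →ₗ[ℝ] ℝ)
    (hsymm : ∀ x y : g, B x y = B y x)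
    (hpos : ∀ x : g, x ≠ 0 → 0 < B x x)
    (h : LieSubalgebra ℝ g)
    (hcodim : Module.finrank ℝ h + 2 = Module.finrank ℝ g)
    (htg : ∀ X : g, (∀ W ∈ h, B X W = 0) →
      ∀ Y ∈ h, ∀ Z ∈ h, B ⁅X, Y⁆ Z + B ⁅X, Z⁆ Y = 0)
    (X₁ X₂ : g)
    (hX₁ : ∀ W ∈ h, B X₁ W = 0) (hX₂ : ∀ W ∈ h, B X₂ W = 0)
    (hindep : LinearIndependent ℝ ![X₁, X₂])
    (hspan : ∀ X : g, (∀ W ∈ h, B X W = 0) → X ∈ Submodule.span ℝ {X₁, X₂}) :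
    ⁅X₁, X₂⁆ ∈ h ∧ ∀ Y ∈ h, ⁅⁅X₁, X₂⁆, Y⁆ = 0 := by
  classical
  have hX1ne : X₁ ≠ 0 := by
    have := hindep.ne_zero 0
    simpa using this
  have hfin := linearIndependent_fin2.mp hindep
  simp only [Matrix.cons_val_one, Matrix.head_cons, Matrix.cons_val_zero] at hfin
  obtain ⟨hX2ne, hnd⟩ := hfin
  have d1pos : 0 < B X₁ X₁ := hpos X₁ hX1ne
  set t : ℝ := B X₁ X₂ / B X₁ X₁ with htdef
  set Z : g := X₂ - t • X₁ with hZdef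
  have hZne : Z ≠ 0 := by
    intro h0
    have hx2 : X₂ = t • X₁ := by
      have := sub_eq_zero.mp h0
      exact this
    by_cases ht : t = 0
    · exact hX2ne (by rw [hx2, ht, zero_smul])
    · exact hnd t⁻¹ (by rw [hx2, smul_smul, inv_mul_cancel₀ ht, one_smul])
  have d2pos : 0 < B Z Z := hpos Z hZne
  have hBXZ : B X₁ Z = 0 := by
    rw [hZdef, map_sub, map_smul, htdef]
    simp only [smul_eq_mul]
    field_simp
    ring
  have sqrt1 : Real.sqrt (B X₁ X₁) * Real.sqrt (B X₁ X₁) = B X₁ X₁ :=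
    Real.mul_self_sqrt d1pos.le
  have sqrt2 : Real.sqrt (B Z Z) * Real.sqrt (B Z Z) = B Z Z :=
    Real.mul_self_sqrt d2pos.le
  have hs1pos : 0 < Real.sqrt (B X₁ X₁) := Real.sqrt_pos.2 d1pos
  have hs2pos : 0 < Real.sqrt (B Z Z) := Real.sqrt_pos.2 d2pos
  set s₁ : ℝ := (Real.sqrt (B X₁ X₁))⁻¹ with hs₁def
  set s₂ : ℝ := (Real.sqrt (B Z Z))⁻¹ with hs₂def
  set Y₁ : g := s₁ • X₁ with hY₁def
  set Y₂ : g := s₂ • Z with hY₂def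
  have hY₁orth : ∀ W ∈ h, B Y₁ W = 0 := by
    intro W hW
    rw [hY₁def, map_smul]
    simp [hX₁ W hW]
  have hY₂orth : ∀ W ∈ h, B Y₂ W = 0 := by
    intro W hW
    rw [hY₂def, map_smul, hZdef, map_sub, map_smul]
    simp [hX₁ W hW, hX₂ W hW]
  have h11' : B Y₁ Y₁ = 1 := by
    rw [hY₁def]
    simp only [map_smul, LinearMap.smul_apply, smul_eq_mul, hs₁def]
    field_simp
    rw [sq, sqrt1]
  have h22' : B Y₂ Y₂ = 1 := by
    rw [hY₂def]
    simp only [map_smul, LinearMap.smul_apply, smul_eq_mul, hs₂def]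
    field_simp
    rw [sq, sqrt2]
  have h12' : B Y₁ Y₂ = 0 := by
    rw [hY₁def, hY₂def]
    simp only [map_smul, LinearMap.smul_apply, smul_eq_mul]
    rw [hBXZ]
    ring
  obtain ⟨hmem, hcent⟩ :=
    aux_ortho g B hsymm hpos h hcodim htg Y₁ Y₂ hY₁orth hY₂orth h11' h22' h12'
  have hbr : ⁅Y₁, Y₂⁆ = (s₁ * s₂) • ⁅X₁, X₂⁆ := by
    rw [hY₁def, hY₂def, hZdef]
    rw [smul_lie, lie_smul, lie_sub, lie_smul, lie_self, smul_zero, sub_zero, smul_smul]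
  have hks : s₁ * s₂ ≠ 0 :=
    mul_ne_zero (inv_ne_zero hs1pos.ne') (inv_ne_zero hs2pos.ne')
  have hbr' : ⁅X₁, X₂⁆ = (s₁ * s₂)⁻¹ • ⁅Y₁, Y₂⁆ := by
    rw [hbr, smul_smul, inv_mul_cancel₀ hks, one_smul]
  constructor
  · rw [hbr']
    exact h.smul_mem _ hmem
  · intro Y hY
    rw [hbr', smul_lie, hcent Y hY, smul_zero]
end

section
/- Let 𝔤 be a filiform nilpotent real Lie algebra of dimension n ≥ 5 with a basis {X₁,…,Xₙ} satisfying the Vergne relations with parameter α ∈ ℝ, namely (with Xᵢ = 0 for i > n and 𝔤ₖ = Span(Xₖ,…,Xₙ)): [X₁,Xᵢ] = X_{i+1} for i ≥ 2, [Xᵢ,Xⱼ] ∈ 𝔤_{i+j} for i + j ≠ n + 1, [Xᵢ,X_{n−i+1}] = (−1)ⁱ α Xₙ for 2 ≤ i ≤ n − 1, and α = 0 if n is odd. If X = Σ_{i=1}^{n} aᵢXᵢ, then X has maximal nilpotency (i.e. ad(X)^{n−2} ≠ 0) if and only if a₁ ≠ 0 and α a₂ ≠ −a₁. -/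
private lemma sum_lie' {L : Type*} [LieRing L] {ι : Type*} (s : Finset ι) (f : ι → L) (x : L) :
    ⁅∑ i ∈ s, f i, x⁆ = ∑ i ∈ s, ⁅f i, x⁆ := by
  induction s using Finset.cons_induction with
  | empty => simp
  | cons i s hi ih => simp [Finset.sum_cons, add_lie, ih]

/-- In a filiform nilpotent Lie algebra of dimension `n ≥ 5` with a basis
satisfying the Vergne relations with parameter `α`, an element `X = Σ aᵢXᵢ` has maximal
nilpotency (`ad(X)^(n-2) ≠ 0`) iff `a₁ ≠ 0` and `α a₂ ≠ -a₁`. -/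
theorem maximal_nilpotency_iff
    (g : Type*) [LieRing g] [LieAlgebra ℝ g] [FiniteDimensional ℝ g]
    [LieRing.IsNilpotent g]
    (n : ℕ) (hn5 : 5 ≤ n) (hn : Module.finrank ℝ g = n)
    (X : ℕ → g) (α : ℝ)
    (hbasis : ∃ b : Module.Basis (Fin n) ℝ g, ∀ i : Fin n, b i = X (i.1 + 1))
    (hzero : ∀ i : ℕ, n < i → X i = 0)
    (hrel1 : ∀ i : ℕ, 2 ≤ i → ⁅X 1, X i⁆ = X (i + 1))
    (hrel2 : ∀ i j : ℕ, 1 ≤ i → 1 ≤ j → i + j ≠ n + 1 →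
      ⁅X i, X j⁆ ∈ Submodule.span ℝ (X '' Set.Icc (i + j) n))
    (hrel3 : ∀ i : ℕ, 2 ≤ i → i ≤ n - 1 →
      ⁅X i, X (n - i + 1)⁆ = ((-1 : ℝ) ^ i * α) • X n)
    (hrel4 : Odd n → α = 0)
    (a : ℕ → ℝ) :
    (LieAlgebra.ad ℝ g (∑ i ∈ Finset.Icc 1 n, a i • X i)) ^ (n - 2) ≠ 0 ↔
      (a 1 ≠ 0 ∧ α * a 2 ≠ -(a 1)) := by
  obtain ⟨b, hb⟩ := hbasis
  set Y : g := ∑ i ∈ Finset.Icc 1 n, a i • X i with hY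
  set D : Module.End ℝ g := LieAlgebra.ad ℝ g Y with hDdef
  set G : ℕ → Submodule ℝ g := fun m => Submodule.span ℝ (X '' Set.Icc m n) with hGdef
  -- basic facts about the filtration
  have hXmem : ∀ m k : ℕ, m ≤ k → X k ∈ G m := by
    intro m k hmk
    rcases le_or_gt k n with hkn | hkn
    · exact Submodule.subset_span (Set.mem_image_of_mem X ⟨hmk, hkn⟩)
    · rw [hzero k hkn]; exact zero_mem _
  have hGmono : ∀ {p q : ℕ}, p ≤ q → G q ≤ G p := by
    intro p q h
    exact Submodule.span_mono (Set.image_mono (Set.Icc_subset_Icc h le_rfl))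
  have hGbot : ∀ m : ℕ, n < m → G m = ⊥ := by
    intro m h
    have : Set.Icc m n = (∅ : Set ℕ) := Set.Icc_eq_empty (by omega)
    simp [hGdef, this]
  -- formula for D
  have hDapp : ∀ v : g, D v = ∑ i ∈ Finset.Icc 1 n, a i • ⁅X i, v⁆ := by
    intro v
    rw [hDdef, LieAlgebra.ad_apply, hY, sum_lie']
    exact Finset.sum_congr rfl fun i _ => smul_lie (a i) (X i) v
  -- splitting the index set
  have hsplit1 : Finset.Icc 1 n = insert 1 (Finset.Icc 2 n) := by
    ext x; simp [Finset.mem_Icc]; omega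
  have hsplit2 : Finset.Icc 2 n = insert 2 (Finset.Icc 3 n) := by
    ext x; simp [Finset.mem_Icc]; omega
  have h1notin : (1 : ℕ) ∉ Finset.Icc 2 n := by simp
  have h2notin : (2 : ℕ) ∉ Finset.Icc 3 n := by simp
  -- brackets of basis vectors land deep in the filtration
  have hbr : ∀ i m : ℕ, 2 ≤ i → 2 ≤ m → m + 2 ≤ n → ⁅X i, X m⁆ ∈ G (m + 2) := by
    intro i m hi hm hmn
    by_cases hc : i + m = n + 1
    · have h3 := hrel3 i hi (by omega)
      rw [show n - i + 1 = m from by omega] at h3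
      rw [h3]
      exact Submodule.smul_mem _ _ (hXmem (m + 2) n hmn)
    · exact hGmono (by omega) (hrel2 i m (by omega) (by omega) hc)
  -- D on X m for 2 ≤ m ≤ n-2, up to deeper terms
  have hDX : ∀ m : ℕ, 2 ≤ m → m + 2 ≤ n → D (X m) - a 1 • X (m + 1) ∈ G (m + 2) := by
    intro m hm hmn
    rw [hDapp, hsplit1, Finset.sum_insert h1notin, hrel1 m hm]
    have heq : a 1 • X (m + 1) + (∑ i ∈ Finset.Icc 2 n, a i • ⁅X i, X m⁆) - a 1 • X (m + 1)
        = ∑ i ∈ Finset.Icc 2 n, a i • ⁅X i, X m⁆ := by abel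
    rw [heq]
    exact Submodule.sum_mem _ fun i hi =>
      Submodule.smul_mem _ _ (hbr i m (Finset.mem_Icc.mp hi).1 hm hmn)
  -- D on X (n-1)
  have hDXn1 : D (X (n - 1)) = (a 1 + α * a 2) • X n := by
    rw [hDapp, hsplit1, Finset.sum_insert h1notin, hsplit2, Finset.sum_insert h2notin]
    have e1 : ⁅X 1, X (n - 1)⁆ = X n := by
      rw [hrel1 (n - 1) (by omega)]; congr 1; omega
    have e2 : ⁅X 2, X (n - 1)⁆ = α • X n := by
      have h3 := hrel3 2 le_rfl (by omega)
      rw [show n - 2 + 1 = n - 1 from by omega] at h3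
      rw [h3]; norm_num
    have e3 : ∑ i ∈ Finset.Icc 3 n, a i • ⁅X i, X (n - 1)⁆ = 0 := by
      apply Finset.sum_eq_zero
      intro i hi
      obtain ⟨hi3, hin⟩ := Finset.mem_Icc.mp hi
      have h := hrel2 i (n - 1) (by omega) (by omega) (by omega)
      have hempty : X '' Set.Icc (i + (n - 1)) n = ∅ := by
        rw [Set.Icc_eq_empty (by omega), Set.image_empty]
      rw [hempty, Submodule.span_empty, Submodule.mem_bot] at h
      rw [h, smul_zero]
    rw [e1, e2, e3, add_zero, smul_smul, ← add_smul]
    congr 1; ring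
  -- D on X n
  have hDXn : D (X n) = 0 := by
    rw [hDapp]
    apply Finset.sum_eq_zero
    intro i hi
    obtain ⟨hi1, hin⟩ := Finset.mem_Icc.mp hi
    rcases eq_or_lt_of_le hi1 with h1 | h2
    · rw [← h1, hrel1 n (by omega), hzero (n + 1) (by omega), smul_zero]
    · have h := hrel2 i n (by omega) (by omega) (by omega)
      have hempty : X '' Set.Icc (i + n) n = ∅ := by
        rw [Set.Icc_eq_empty (by omega), Set.image_empty]
      rw [hempty, Submodule.span_empty, Submodule.mem_bot] at h
      rw [h, smul_zero]
  have hDhigh : ∀ m : ℕ, n < m → D (X m) = 0 := by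
    intro m h
    rw [hzero m h, map_zero]
  -- D raises the filtration degree
  have hDmem : ∀ k : ℕ, 2 ≤ k → D (X k) ∈ G (k + 1) := by
    intro k hk
    by_cases h1 : k + 2 ≤ n
    · have : D (X k) = (D (X k) - a 1 • X (k + 1)) + a 1 • X (k + 1) := by abel
      rw [this]
      exact Submodule.add_mem _ (hGmono (by omega) (hDX k hk h1))
        (Submodule.smul_mem _ _ (hXmem (k + 1) (k + 1) le_rfl))
    · by_cases h2 : k = n - 1
      · rw [h2, hDXn1]
        exact Submodule.smul_mem _ _ (hXmem (n - 1 + 1) n (by omega))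
      · by_cases h3 : k = n
        · rw [h3, hDXn]; exact zero_mem _
        · rw [hDhigh k (by omega)]; exact zero_mem _
  have hDG : ∀ m : ℕ, 2 ≤ m → ∀ v ∈ G m, D v ∈ G (m + 1) := by
    intro m hm v hv
    have hmap : Submodule.map D (G m) ≤ G (m + 1) := by
      rw [hGdef]
      rw [Submodule.map_span, Submodule.span_le]
      rintro _ ⟨_, ⟨k, hk, rfl⟩, rfl⟩
      exact hGmono (by exact Nat.succ_le_succ hk.1) (hDmem k (le_trans hm hk.1))
    exact hmap ⟨v, hv, rfl⟩
  have hiter : ∀ j m : ℕ, 2 ≤ m → ∀ v ∈ G m, (D ^ j) v ∈ G (m + j) := by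
    intro j
    induction j with
    | zero => intro m hm v hv; simpa using hv
    | succ j ih =>
      intro m hm v hv
      rw [pow_succ, Module.End.mul_apply]
      have := ih (m + 1) (by omega) (D v) (hDG m hm v hv)
      rw [show m + (j + 1) = m + 1 + j from by omega]
      exact this
  -- the key computation
  have hC : ∀ j : ℕ, j ≤ n - 3 →
      (D ^ (j + 1)) (X (n - 1 - j)) = ((a 1) ^ j * (a 1 + α * a 2)) • X n := by
    intro j
    induction j with
    | zero =>
      intro _
      simp only [pow_one, pow_zero, one_mul, Nat.sub_zero]
      exact hDXn1
    | succ j ih =>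
      intro hj
      set k := n - 1 - (j + 1) with hkdef
      have hk2 : 2 ≤ k := by omega
      have hkn : k + 2 ≤ n := by omega
      have he : (D ^ (j + 1)) (D (X k) - a 1 • X (k + 1)) = 0 := by
        have hh := hiter (j + 1) (k + 2) (by omega) _ (hDX k hk2 hkn)
        rw [hGbot (k + 2 + (j + 1)) (by omega), Submodule.mem_bot] at hh
        exact hh
      have hx : (D ^ (j + 1)) (X (k + 1)) = ((a 1) ^ j * (a 1 + α * a 2)) • X n := by
        rw [show k + 1 = n - 1 - j from by omega]
        exact ih (by omega)
      have hrw : (D ^ (j + 1 + 1)) (X k)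
          = (D ^ (j + 1)) (a 1 • X (k + 1) + (D (X k) - a 1 • X (k + 1))) := by
        rw [pow_succ, Module.End.mul_apply]; congr 1; abel
      rw [hrw, map_add, map_smul, hx, he, add_zero, smul_smul]
      congr 1; ring
  -- D on X 1
  have hD1 : D (X 1) + a 2 • X 3 ∈ G 4 := by
    rw [hDapp, hsplit1, Finset.sum_insert h1notin, hsplit2, Finset.sum_insert h2notin]
    have e1 : ⁅X 1, X 1⁆ = (0 : g) := lie_self _
    have e2 : ⁅X 2, X 1⁆ = -X 3 := by
      rw [← lie_skew, hrel1 2 le_rfl]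
    rw [e1, e2, smul_zero, zero_add, smul_neg]
    have heq : -(a 2 • X 3) + (∑ i ∈ Finset.Icc 3 n, a i • ⁅X i, X 1⁆) + a 2 • X 3
        = ∑ i ∈ Finset.Icc 3 n, a i • ⁅X i, X 1⁆ := by abel
    rw [heq]
    apply Submodule.sum_mem
    intro i hi
    obtain ⟨hi3, hin⟩ := Finset.mem_Icc.mp hi
    have : ⁅X i, X 1⁆ = -X (i + 1) := by
      rw [← lie_skew, hrel1 i (by omega)]
    rw [this, smul_neg]
    exact Submodule.neg_mem _ (Submodule.smul_mem _ _ (hXmem 4 (i + 1) (by omega)))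
  -- now the equivalence
  constructor
  · -- forward: contrapositive
    intro hne
    by_contra hcon
    push_neg at hcon
    apply hne
    have c0 : (a 1) ^ (n - 4) * (a 1 + α * a 2) = 0 := by
      by_cases ha : a 1 = 0
      · rw [ha, zero_pow (by omega : n - 4 ≠ 0), zero_mul]
      · have := hcon ha
        have : a 1 + α * a 2 = 0 := by rw [this]; ring
        rw [this, mul_zero]
    have key : ∀ m : ℕ, 1 ≤ m → m ≤ n → (D ^ (n - 2)) (X m) = 0 := by
      intro m hm1 hmn
      rcases Nat.lt_or_ge m 3 with hm3 | hm3
      · interval_cases m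
        · -- m = 1
          have h3 := hC (n - 4) (by omega)
          rw [show n - 1 - (n - 4) = 3 from by omega, show n - 4 + 1 = n - 3 from by omega,
            c0, zero_smul] at h3
          have hz : (D ^ (n - 3)) (D (X 1) + a 2 • X 3) = 0 := by
            have hh := hiter (n - 3) 4 (by omega) _ hD1
            rw [hGbot (4 + (n - 3)) (by omega), Submodule.mem_bot] at hh
            exact hh
          have hrw : (D ^ (n - 2)) (X 1)
              = (D ^ (n - 3)) (D (X 1) + a 2 • X 3) - a 2 • ((D ^ (n - 3)) (X 3)) := by
            rw [show n - 2 = (n - 3) + 1 from by omega, pow_succ, Module.End.mul_apply,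
              map_add, map_smul]
            abel
          rw [hrw, hz, h3, smul_zero, sub_zero]
        · -- m = 2
          have h2 := hC (n - 3) (by omega)
          rw [show n - 1 - (n - 3) = 2 from by omega, show n - 3 + 1 = n - 2 from by omega] at h2
          have hc' : (a 1) ^ (n - 3) * (a 1 + α * a 2) = 0 := by
            rw [show n - 3 = 1 + (n - 4) from by omega, pow_add, pow_one, mul_assoc, c0,
              mul_zero]
          rw [hc', zero_smul] at h2
          exact h2
      · -- m ≥ 3
        have hh := hiter (n - 2) m (by omega) _ (hXmem m m le_rfl)
        rw [hGbot (m + (n - 2)) (by omega), Submodule.mem_bot] at hh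
        exact hh
    apply Module.Basis.ext b
    intro i
    rw [hb i, LinearMap.zero_apply]
    exact key (i.1 + 1) (by omega) (by omega)
  · -- backward
    rintro ⟨h1, h2⟩ h0
    have h2' : a 1 + α * a 2 ≠ 0 := fun h => h2 (by linarith)
    have hXn : X n ≠ 0 := by
      have hx : X n = b ⟨n - 1, by omega⟩ := by
        rw [hb ⟨n - 1, by omega⟩]; congr 1; simp only [Fin.val_mk]; omega
      rw [hx]
      exact b.ne_zero _
    have hkey := hC (n - 3) (by omega)
    rw [show n - 1 - (n - 3) = 2 from by omega, show n - 3 + 1 = n - 2 from by omega, h0,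
      LinearMap.zero_apply] at hkey
    exact smul_ne_zero (mul_ne_zero (pow_ne_zero _ h1) h2') hXn hkey.symm
end
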